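/- arXiv:2309.10432 — 4 statements merged into one kernel-verified Lean document; each statement's English description precedes it below -/
import Mathlib

section
/- Let ℓ be an odd prime, let V ⊆ Q_ℓ be an F_ℓ-linear subspace of dimension at most 2, and let c ∈ F_ℓ. Then the number of elements v ∈ V with disc(v) = c is at most 2ℓ. -/
/-- The space `M₂(F_ℓ)` of 2×2 matrices over `F_ℓ`. -/
abbrev MatF (ℓ : ℕ) := Matrix (Fin 2) (Fin 2) (ZMod ℓ)

/-- The subspace `F_ℓ·1` of scalar matrices. -/
def scalarSub (ℓ : ℕ) : Submodule (ZMod ℓ) (MatF ℓ) :=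
  Submodule.span (ZMod ℓ) {(1 : MatF ℓ)}

/-- The quotient space `Q_ℓ = M₂(F_ℓ)/(F_ℓ·1)`. -/
abbrev QuotF (ℓ : ℕ) := MatF ℓ ⧸ scalarSub ℓ

open Polynomial in
/-- A quadratic equation over a field has at most two solutions. -/
lemma quadCard {K : Type*} [Field K] [Fintype K] [DecidableEq K] {A : K} (B D : K)
    (hA : A ≠ 0) :
    (Finset.univ.filter (fun y : K => A * y ^ 2 + B * y + D = 0)).card ≤ 2 := by
  have hp : (C A * X ^ 2 + C B * X + C D : K[X]) ≠ 0 := by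
    intro h
    apply hA
    have := congrArg (fun q : K[X] => q.coeff 2) h
    simpa [coeff_X_pow] using this
  have hsub : Finset.univ.filter (fun y : K => A * y ^ 2 + B * y + D = 0)
      ⊆ (C A * X ^ 2 + C B * X + C D : K[X]).roots.toFinset := by
    intro y hy
    simp only [Finset.mem_filter, Finset.mem_univ, true_and] at hy
    rw [Multiset.mem_toFinset, mem_roots']
    exact ⟨hp, by simp [IsRoot, hy]⟩
  calc (Finset.univ.filter (fun y : K => A * y ^ 2 + B * y + D = 0)).card
      ≤ (C A * X ^ 2 + C B * X + C D : K[X]).roots.toFinset.card := Finset.card_le_card hsub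
    _ ≤ Multiset.card (C A * X ^ 2 + C B * X + C D : K[X]).roots := Multiset.toFinset_card_le _
    _ ≤ (C A * X ^ 2 + C B * X + C D : K[X]).natDegree := card_roots' _
    _ ≤ 2 := natDegree_quadratic_le

/-- A nonzero binary quadratic form takes any value at most `2q` times. -/
lemma countQuad {K : Type*} [Field K] [Fintype K] [DecidableEq K] (A B C c : K)
    (h : ¬(A = 0 ∧ B = 0 ∧ C = 0)) :
    (Finset.univ.filter
      (fun p : K × K => A * p.1 ^ 2 + B * (p.1 * p.2) + C * p.2 ^ 2 = c)).card
      ≤ 2 * Fintype.card K := by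
  set S := Finset.univ.filter
      (fun p : K × K => A * p.1 ^ 2 + B * (p.1 * p.2) + C * p.2 ^ 2 = c) with hS
  by_cases hC : C ≠ 0
  · rw [Finset.card_eq_sum_card_fiberwise (f := Prod.fst) (t := (Finset.univ : Finset K))
      (fun x _ => Finset.mem_univ _)]
    have key : ∀ x : K, (S.filter (fun p => p.1 = x)).card ≤ 2 := by
      intro x
      have hsub : S.filter (fun p => p.1 = x)
          ⊆ (Finset.univ.filter
              (fun y : K => C * y ^ 2 + (B * x) * y + (A * x ^ 2 - c) = 0)).image
            (fun y => (x, y)) := by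
        intro p hp
        simp only [hS, Finset.mem_filter, Finset.mem_univ, true_and] at hp
        obtain ⟨hpe, hpx⟩ := hp
        refine Finset.mem_image.mpr ⟨p.2, ?_, ?_⟩
        · simp only [Finset.mem_filter, Finset.mem_univ, true_and]
          rw [hpx] at hpe
          linear_combination hpe
        · rw [← hpx]
      calc (S.filter (fun p => p.1 = x)).card
          ≤ _ := Finset.card_le_card hsub
        _ ≤ (Finset.univ.filter
              (fun y : K => C * y ^ 2 + (B * x) * y + (A * x ^ 2 - c) = 0)).card :=
            Finset.card_image_le
        _ ≤ 2 := quadCard _ _ hC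
    calc ∑ x : K, (S.filter (fun p => p.1 = x)).card ≤ ∑ _x : K, 2 :=
          Finset.sum_le_sum (fun x _ => key x)
      _ = 2 * Fintype.card K := by simp [mul_comm]
  · push_neg at hC
    by_cases hA : A ≠ 0
    · rw [Finset.card_eq_sum_card_fiberwise (f := Prod.snd) (t := (Finset.univ : Finset K))
        (fun x _ => Finset.mem_univ _)]
      have key : ∀ y : K, (S.filter (fun p => p.2 = y)).card ≤ 2 := by
        intro y
        have hsub : S.filter (fun p => p.2 = y)
            ⊆ (Finset.univ.filter
                (fun x : K => A * x ^ 2 + (B * y) * x + (C * y ^ 2 - c) = 0)).image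
              (fun x => (x, y)) := by
          intro p hp
          simp only [hS, Finset.mem_filter, Finset.mem_univ, true_and] at hp
          obtain ⟨hpe, hpy⟩ := hp
          refine Finset.mem_image.mpr ⟨p.1, ?_, ?_⟩
          · simp only [Finset.mem_filter, Finset.mem_univ, true_and]
            rw [hpy] at hpe
            linear_combination hpe
          · rw [← hpy]
        calc (S.filter (fun p => p.2 = y)).card
            ≤ _ := Finset.card_le_card hsub
          _ ≤ (Finset.univ.filter
                (fun x : K => A * x ^ 2 + (B * y) * x + (C * y ^ 2 - c) = 0)).card :=
              Finset.card_image_le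
          _ ≤ 2 := quadCard _ _ hA
      calc ∑ y : K, (S.filter (fun p => p.2 = y)).card ≤ ∑ _y : K, 2 :=
            Finset.sum_le_sum (fun y _ => key y)
        _ = 2 * Fintype.card K := by simp [mul_comm]
    · push_neg at hA
      have hB : B ≠ 0 := by
        intro hB
        exact h ⟨hA, hB, hC⟩
      have hsub : S ⊆ ({(0 : K)} ×ˢ (Finset.univ : Finset K))
          ∪ (Finset.univ : Finset K).image (fun x : K => (x, c * (B * x)⁻¹)) := by
        intro p hp
        simp only [hS, Finset.mem_filter, Finset.mem_univ, true_and, hA, hC] at hp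
        rcases eq_or_ne p.1 0 with h0 | h0
        · exact Finset.mem_union.mpr (Or.inl
            (Finset.mem_product.mpr ⟨by simp [h0], Finset.mem_univ _⟩))
        · refine Finset.mem_union.mpr (Or.inr (Finset.mem_image.mpr ⟨p.1, Finset.mem_univ _, ?_⟩))
          have hBx : B * p.1 ≠ 0 := mul_ne_zero hB h0
          have : p.2 = c * (B * p.1)⁻¹ := by
            rw [eq_mul_inv_iff_mul_eq₀ hBx]
            linear_combination hp
          rw [← this]
      calc S.card ≤ _ := Finset.card_le_card hsub
        _ ≤ ({(0 : K)} ×ˢ (Finset.univ : Finset K)).card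
            + ((Finset.univ : Finset K).image (fun x : K => (x, c * (B * x)⁻¹))).card :=
            Finset.card_union_le _ _
        _ ≤ Fintype.card K + Fintype.card K := by
            refine Nat.add_le_add ?_ ?_
            · simp [Finset.card_product]
            · exact le_trans Finset.card_image_le (by simp)
        _ = 2 * Fintype.card K := by ring

/-- The discriminant is a quadratic form: expansion on a linear combination. -/
lemma disc_expand (ℓ : ℕ) (m1 m2 : MatF ℓ) (x y : ZMod ℓ) :
    (Matrix.trace (x • m1 + y • m2)) ^ 2 - 4 * (x • m1 + y • m2).det
      = ((Matrix.trace m1) ^ 2 - 4 * m1.det) * x ^ 2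
        + (((Matrix.trace (m1 + m2)) ^ 2 - 4 * (m1 + m2).det)
            - ((Matrix.trace m1) ^ 2 - 4 * m1.det)
            - ((Matrix.trace m2) ^ 2 - 4 * m2.det)) * (x * y)
        + ((Matrix.trace m2) ^ 2 - 4 * m2.det) * y ^ 2 := by
  simp only [Matrix.det_fin_two, Matrix.trace_fin_two, Matrix.add_apply, Matrix.smul_apply,
    smul_eq_mul]
  ring

/-- Key algebra: two isotropic vectors of `a² + bc` with vanishing polar form are
proportional (case `b1 ≠ 0`). -/
lemma depOfIso_b {K : Type*} [Field K] {a1 b1 c1 a2 b2 c2 : K} (hb1 : b1 ≠ 0)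
    (h1 : a1 ^ 2 + b1 * c1 = 0) (h2 : a2 ^ 2 + b2 * c2 = 0)
    (h3 : 2 * a1 * a2 + b1 * c2 + b2 * c1 = 0) :
    b2 * a1 = b1 * a2 ∧ b2 * b1 = b1 * b2 ∧ b2 * c1 = b1 * c2 := by
  have hkey : (a2 * b1 - a1 * b2) ^ 2 = 0 := by
    linear_combination b1 ^ 2 * h2 - b1 * b2 * h3 + b2 ^ 2 * h1
  have hk : a2 * b1 = a1 * b2 := by
    have := pow_eq_zero_iff (two_ne_zero) |>.mp hkey
    linear_combination this
  refine ⟨by linear_combination -hk, mul_comm _ _, ?_⟩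
  have hkey2 : b1 * (b2 * c1) = b1 * (b1 * c2) := by
    linear_combination 2 * b2 * h1 - b1 * h3 + 2 * a1 * hk
  exact mul_left_cancel₀ hb1 hkey2

/-- Key algebra: two isotropic vectors of the quadratic form `a² + bc` with vanishing
polar form are linearly dependent. -/
lemma depLemma {K : Type*} [Field K] {a1 b1 c1 a2 b2 c2 : K}
    (h1 : a1 ^ 2 + b1 * c1 = 0) (h2 : a2 ^ 2 + b2 * c2 = 0)
    (h3 : 2 * a1 * a2 + b1 * c2 + b2 * c1 = 0) :
    ∃ s t : K, (s ≠ 0 ∨ t ≠ 0) ∧ s * a1 = t * a2 ∧ s * b1 = t * b2 ∧ s * c1 = t * c2 := by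
  by_cases hb1 : b1 ≠ 0
  · obtain ⟨x, y, z⟩ := depOfIso_b hb1 h1 h2 h3
    exact ⟨b2, b1, Or.inr hb1, x, y, z⟩
  push_neg at hb1
  by_cases hc1 : c1 ≠ 0
  · obtain ⟨x, y, z⟩ := depOfIso_b (a1 := a1) (b1 := c1) (c1 := b1) (a2 := a2) (b2 := c2)
      (c2 := b2) hc1 (by linear_combination h1) (by linear_combination h2)
      (by linear_combination h3)
    exact ⟨c2, c1, Or.inr hc1, x, z, y⟩
  push_neg at hc1
  have ha1 : a1 = 0 := by
    have hsq : a1 ^ 2 = 0 := by linear_combination h1 - c1 * hb1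
    exact pow_eq_zero_iff (two_ne_zero) |>.mp hsq
  exact ⟨1, 0, Or.inl one_ne_zero, by simp [ha1], by simp [hb1], by simp [hc1]⟩

/-- Let `ℓ` be an odd prime, `d : Q_ℓ → F_ℓ` the map induced by
the discriminant `disc(α) = (Tr α)² − 4 det α`, `V ⊆ Q_ℓ` a subspace of dimension
at most `2`, and `c ∈ F_ℓ`.  Then the number of `v ∈ V` with `d v = c` is at
most `2ℓ`. -/
theorem stmt_3 (ℓ : ℕ) (hℓ : Nat.Prime ℓ) (hodd : Odd ℓ)
    (d : QuotF ℓ → ZMod ℓ)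
    (hd : ∀ m : MatF ℓ,
      d (Submodule.Quotient.mk m) = (Matrix.trace m) ^ 2 - 4 * m.det)
    (V : Submodule (ZMod ℓ) (QuotF ℓ))
    (hdim : Module.finrank (ZMod ℓ) ↥V ≤ 2)
    (c : ZMod ℓ) :
    Nat.card {v : QuotF ℓ | v ∈ V ∧ d v = c} ≤ 2 * ℓ := by
  classical
  haveI : Fact ℓ.Prime := ⟨hℓ⟩
  haveI : NeZero ℓ := ⟨hℓ.pos.ne'⟩
  haveI : Finite (QuotF ℓ) :=
    Finite.of_surjective _ (Submodule.mkQ_surjective (scalarSub ℓ))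
  haveI : Finite ↥V := inferInstance
  have hℓ2 : ℓ ≠ 2 := by
    rintro rfl
    revert hodd
    decide
  have h2 : (2 : ZMod ℓ) ≠ 0 := by
    intro h
    have h2' : ((2 : ℕ) : ZMod ℓ) = 0 := by exact_mod_cast h
    have : ℓ ∣ 2 := (ZMod.natCast_eq_zero_iff 2 ℓ).mp h2'
    exact hℓ2 ((Nat.prime_dvd_prime_iff_eq hℓ Nat.prime_two).mp this)
  have h4 : (4 : ZMod ℓ) ≠ 0 := by
    have : (4 : ZMod ℓ) = 2 * 2 := by norm_num
    rw [this]
    exact mul_ne_zero h2 h2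
  by_cases hr : Module.finrank (ZMod ℓ) ↥V = 2
  · -- dimension 2 case
    haveI : Module.Finite (ZMod ℓ) ↥V := Module.Finite.of_finite
    let b : Module.Basis (Fin 2) (ZMod ℓ) ↥V := Module.finBasisOfFinrankEq (ZMod ℓ) ↥V hr
    set e1 : QuotF ℓ := ((b 0 : ↥V) : QuotF ℓ) with he1
    set e2 : QuotF ℓ := ((b 1 : ↥V) : QuotF ℓ) with he2
    obtain ⟨p1, hp1⟩ := Submodule.mkQ_surjective (scalarSub ℓ) e1
    obtain ⟨p2, hp2⟩ := Submodule.mkQ_surjective (scalarSub ℓ) e2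
    rw [Submodule.mkQ_apply] at hp1 hp2
    have h1mem : (1 : MatF ℓ) ∈ scalarSub ℓ := Submodule.mem_span_singleton_self _
    set n1 : MatF ℓ := p1 - (2⁻¹ * Matrix.trace p1) • 1 with hn1
    set n2 : MatF ℓ := p2 - (2⁻¹ * Matrix.trace p2) • 1 with hn2
    have hmk1 : (Submodule.Quotient.mk n1 : QuotF ℓ) = e1 := by
      rw [hn1, Submodule.Quotient.mk_sub, Submodule.Quotient.mk_smul,
        (Submodule.Quotient.mk_eq_zero _).mpr h1mem, smul_zero, sub_zero, hp1]
    have hmk2 : (Submodule.Quotient.mk n2 : QuotF ℓ) = e2 := by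
      rw [hn2, Submodule.Quotient.mk_sub, Submodule.Quotient.mk_smul,
        (Submodule.Quotient.mk_eq_zero _).mpr h1mem, smul_zero, sub_zero, hp2]
    have htrone : Matrix.trace (1 : MatF ℓ) = 2 := by
      rw [Matrix.trace_one]
      norm_num
    have htr1 : Matrix.trace n1 = 0 := by
      rw [hn1, Matrix.trace_sub, Matrix.trace_smul, htrone, smul_eq_mul]
      field_simp
      ring
    have htr2 : Matrix.trace n2 = 0 := by
      rw [hn2, Matrix.trace_sub, Matrix.trace_smul, htrone, smul_eq_mul]
      field_simp
      ring
    set A : ZMod ℓ := d e1 with hA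
    set Cc : ZMod ℓ := d e2 with hCc
    set B : ZMod ℓ := d (e1 + e2) - A - Cc with hB
    have hAval : A = (Matrix.trace n1) ^ 2 - 4 * n1.det := by rw [hA, ← hmk1, hd]
    have hCval : Cc = (Matrix.trace n2) ^ 2 - 4 * n2.det := by rw [hCc, ← hmk2, hd]
    have hSval : d (e1 + e2) = (Matrix.trace (n1 + n2)) ^ 2 - 4 * (n1 + n2).det := by
      rw [← hmk1, ← hmk2, ← Submodule.Quotient.mk_add, hd]
    have hq : ∀ x y : ZMod ℓ,
        d (x • e1 + y • e2) = A * x ^ 2 + B * (x * y) + Cc * y ^ 2 := by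
      intro x y
      have hx : x • e1 + y • e2 = (Submodule.Quotient.mk (x • n1 + y • n2) : QuotF ℓ) := by
        rw [Submodule.Quotient.mk_add, Submodule.Quotient.mk_smul,
          Submodule.Quotient.mk_smul, hmk1, hmk2]
      rw [hx, hd, hB, hAval, hCval, hSval]
      exact disc_expand ℓ n1 n2 x y
    -- the coefficients are not all zero
    have hABC : ¬ (A = 0 ∧ B = 0 ∧ Cc = 0) := by
      rintro ⟨hA0, hB0, hC0⟩
      have hdisc_tr0 : ∀ n : MatF ℓ, Matrix.trace n = 0 →
          (Matrix.trace n) ^ 2 - 4 * n.det = 4 * (n 0 0 ^ 2 + n 0 1 * n 1 0) := by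
        intro n hn
        have h11 : n 1 1 = -(n 0 0) := by
          rw [Matrix.trace_fin_two] at hn
          linear_combination hn
        rw [Matrix.det_fin_two, Matrix.trace_fin_two, h11]
        ring
      have H1 : n1 0 0 ^ 2 + n1 0 1 * n1 1 0 = 0 := by
        have := hAval
        rw [hA0, hdisc_tr0 n1 htr1] at this
        exact (mul_eq_zero.mp this.symm).resolve_left h4
      have H2 : n2 0 0 ^ 2 + n2 0 1 * n2 1 0 = 0 := by
        have := hCval
        rw [hC0, hdisc_tr0 n2 htr2] at this
        exact (mul_eq_zero.mp this.symm).resolve_left h4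
      have htr12 : Matrix.trace (n1 + n2) = 0 := by
        rw [Matrix.trace_add, htr1, htr2, add_zero]
      have H12 : (n1 + n2) 0 0 ^ 2 + (n1 + n2) 0 1 * (n1 + n2) 1 0 = 0 := by
        have hs : d (e1 + e2) = 0 := by
          have : d (e1 + e2) = B + A + Cc := by rw [hB]; ring
          rw [this, hA0, hB0, hC0]
          ring
        have := hSval
        rw [hs, hdisc_tr0 (n1 + n2) htr12] at this
        exact (mul_eq_zero.mp this.symm).resolve_left h4
      simp only [Matrix.add_apply] at H12
      have H3 : 2 * (n1 0 0) * (n2 0 0) + (n1 0 1) * (n2 1 0) + (n2 0 1) * (n1 1 0) = 0 := by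
        linear_combination H12 - H1 - H2
      obtain ⟨s, t, hst, hsa, hsb, hsc⟩ := depLemma H1 H2 H3
      have h111 : n1 1 1 = -(n1 0 0) := by
        rw [Matrix.trace_fin_two] at htr1
        linear_combination htr1
      have h211 : n2 1 1 = -(n2 0 0) := by
        rw [Matrix.trace_fin_two] at htr2
        linear_combination htr2
      have h11' : s * n1 1 1 = t * n2 1 1 := by
        rw [h111, h211]
        linear_combination -hsa
      have hmat : s • n1 = t • n2 := by
        ext i j
        fin_cases i <;> fin_cases j
        · simpa [Matrix.smul_apply] using hsa
        · simpa [Matrix.smul_apply] using hsb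
        · simpa [Matrix.smul_apply] using hsc
        · simpa [Matrix.smul_apply] using h11'
      have heq : s • e1 = t • e2 := by
        rw [← hmk1, ← hmk2, ← Submodule.Quotient.mk_smul, ← Submodule.Quotient.mk_smul, hmat]
      have hVeq : s • b 0 = t • b 1 := by
        apply Subtype.ext
        simpa [he1, he2] using heq
      have h0 := congrArg (fun w => (b.repr w) 0) hVeq
      have h1 := congrArg (fun w => (b.repr w) 1) hVeq
      simp only [map_smul, Finsupp.smul_apply, Module.Basis.repr_self, smul_eq_mul] at h0 h1
      rw [Finsupp.single_eq_same, Finsupp.single_eq_of_ne' (by decide : (1 : Fin 2) ≠ 0)] at h0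
      rw [Finsupp.single_eq_of_ne' (by decide : (0 : Fin 2) ≠ 1), Finsupp.single_eq_same] at h1
      simp only [mul_one, mul_zero] at h0 h1
      rcases hst with hs | ht
      · exact hs h0
      · exact ht h1.symm
    -- reconstruction of elements of V from coordinates
    have hrepr : ∀ w : ↥V, (w : QuotF ℓ) = (b.repr w 0) • e1 + (b.repr w 1) • e2 := by
      intro w
      have hw := b.sum_repr w
      rw [Fin.sum_univ_two] at hw
      have := congrArg (Subtype.val) hw
      simp only [Submodule.coe_add, SetLike.val_smul] at this
      rw [← this, he1, he2]
    -- inject the solution set into the solution set of the binary form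
    let T := {p : (ZMod ℓ) × (ZMod ℓ) // A * p.1 ^ 2 + B * (p.1 * p.2) + Cc * p.2 ^ 2 = c}
    have hcard : Nat.card {v : QuotF ℓ | v ∈ V ∧ d v = c} ≤ Nat.card T := by
      apply Nat.card_le_card_of_injective
        (f := fun v : {v : QuotF ℓ | v ∈ V ∧ d v = c} =>
          (⟨(b.repr ⟨v.1, v.2.1⟩ 0, b.repr ⟨v.1, v.2.1⟩ 1), by
            have hv := hrepr ⟨v.1, v.2.1⟩
            have hc := v.2.2
            rw [show v.1 = ((⟨v.1, v.2.1⟩ : ↥V) : QuotF ℓ) from rfl, hv, hq] at hc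
            exact hc⟩ : T))
      intro u v huv
      have hcoords : ((b.repr ⟨u.1, u.2.1⟩ 0, b.repr ⟨u.1, u.2.1⟩ 1) : ZMod ℓ × ZMod ℓ)
          = (b.repr ⟨v.1, v.2.1⟩ 0, b.repr ⟨v.1, v.2.1⟩ 1) := congrArg Subtype.val huv
      have h0 : b.repr ⟨u.1, u.2.1⟩ 0 = b.repr ⟨v.1, v.2.1⟩ 0 := congrArg Prod.fst hcoords
      have h1 : b.repr ⟨u.1, u.2.1⟩ 1 = b.repr ⟨v.1, v.2.1⟩ 1 := congrArg Prod.snd hcoords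
      apply Subtype.ext
      rw [show u.1 = ((⟨u.1, u.2.1⟩ : ↥V) : QuotF ℓ) from rfl, hrepr ⟨u.1, u.2.1⟩, h0, h1,
        ← hrepr ⟨v.1, v.2.1⟩]
    have hTcard : Nat.card T = (Finset.univ.filter
        (fun p : (ZMod ℓ) × (ZMod ℓ) =>
          A * p.1 ^ 2 + B * (p.1 * p.2) + Cc * p.2 ^ 2 = c)).card := by
      rw [Nat.card_eq_fintype_card, Fintype.card_subtype]
    calc Nat.card {v : QuotF ℓ | v ∈ V ∧ d v = c} ≤ Nat.card T := hcard
      _ = _ := hTcard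
      _ ≤ 2 * Fintype.card (ZMod ℓ) := countQuad A B Cc c hABC
      _ = 2 * ℓ := by rw [ZMod.card]
  · -- dimension ≤ 1 case
    have hr1 : Module.finrank (ZMod ℓ) ↥V ≤ 1 := by omega
    have hinj : Nat.card {v : QuotF ℓ | v ∈ V ∧ d v = c} ≤ Nat.card ↥V := by
      have hsub : {v : QuotF ℓ | v ∈ V ∧ d v = c} ⊆ (V : Set (QuotF ℓ)) := fun v hv => hv.1
      exact Nat.card_mono (Set.toFinite _) hsub
    haveI : Fintype ↥V := Fintype.ofFinite _
    have hVcard : Nat.card ↥V = ℓ ^ Module.finrank (ZMod ℓ) ↥V := by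
      rw [Nat.card_eq_fintype_card, Module.card_eq_pow_finrank (K := ZMod ℓ), ZMod.card]
    have : ℓ ^ Module.finrank (ZMod ℓ) ↥V ≤ ℓ ^ 1 :=
      Nat.pow_le_pow_right hℓ.pos hr1
    calc Nat.card {v : QuotF ℓ | v ∈ V ∧ d v = c} ≤ Nat.card ↥V := hinj
      _ = ℓ ^ Module.finrank (ZMod ℓ) ↥V := hVcard
      _ ≤ ℓ ^ 1 := this
      _ = ℓ := pow_one ℓ
      _ ≤ 2 * ℓ := by omega
end

section
/- Let ℓ > 2 be a prime number. Let α₁, α₂, α₃ be independent random elements of Q_ℓ, each supported on nonzero elements and each having an SL₂(F_ℓ)-invariant distribution (under conjugation). Then (α₁, α₂, α₃) is an F_ℓ-basis of Q_ℓ (equivalently, the three elements are F_ℓ-linearly independent) with probability at least 1/8. -/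
namespace Stmt4

/-! ### cross product helpers on coordinates -/

section Coord
variable {F : Type*} [Field F]

/-- explicit cross product on coordinate vectors -/
def crs (v w : Fin 3 → F) : Fin 3 → F :=
  ![v 1 * w 2 - v 2 * w 1, v 2 * w 0 - v 0 * w 2, v 0 * w 1 - v 1 * w 0]

/-- explicit dot product -/
def dt (v w : Fin 3 → F) : F := v 0 * w 0 + v 1 * w 1 + v 2 * w 2

lemma crs_ne_zero {v₁ v₂ : Fin 3 → F} (h : LinearIndependent F ![v₁, v₂]) :
    crs v₁ v₂ ≠ 0 := by
  intro hf
  have h0 := congrFun hf 0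
  have h1 := congrFun hf 1
  have h2 := congrFun hf 2
  simp only [crs, Matrix.cons_val_zero, Matrix.cons_val_one, Matrix.head_cons,
    Matrix.cons_val_two, Matrix.tail_cons, Pi.zero_apply] at h0 h1 h2
  rw [linearIndependent_fin2] at h
  obtain ⟨hne, hnsp⟩ := h
  simp only [Matrix.cons_val_one, Matrix.head_cons, Matrix.cons_val_zero] at hne hnsp
  have minor : ∀ i j : Fin 3, v₁ i * v₂ j = v₁ j * v₂ i := by
    intro i j
    fin_cases i <;> fin_cases j <;>
      simp only [Fin.zero_eta, Fin.mk_one, Fin.reduceFinMk]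
    all_goals try ring
    all_goals try linear_combination h0
    all_goals try linear_combination h1
    all_goals try linear_combination h2
    all_goals try linear_combination (-1 : F) * h0
    all_goals try linear_combination (-1 : F) * h1
    all_goals try linear_combination (-1 : F) * h2
  obtain ⟨i, hi⟩ : ∃ i, v₂ i ≠ 0 := by
    by_contra hall
    push_neg at hall
    exact hne (funext hall)
  refine hnsp (v₁ i * (v₂ i)⁻¹) (funext fun j => ?_)
  have := minor i j
  rw [Pi.smul_apply, smul_eq_mul, mul_right_comm, mul_inv_eq_iff_eq_mul₀ hi]
  linear_combination this

lemma dt_crs_left (v₁ v₂ : Fin 3 → F) : dt (crs v₁ v₂) v₁ = 0 := by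
  simp only [dt, crs, Matrix.cons_val_zero, Matrix.cons_val_one, Matrix.head_cons,
    Matrix.cons_val_two, Matrix.tail_cons]
  ring

lemma dt_crs_right (v₁ v₂ : Fin 3 → F) : dt (crs v₁ v₂) v₂ = 0 := by
  simp only [dt, crs, Matrix.cons_val_zero, Matrix.cons_val_one, Matrix.head_cons,
    Matrix.cons_val_two, Matrix.tail_cons]
  ring

/-- if w is orthogonal to both v₁ and v₂ then w × (v₁ × v₂) = 0 -/
lemma crs_eq_zero_of_orth {w v₁ v₂ : Fin 3 → F} (h1 : dt w v₁ = 0) (h2 : dt w v₂ = 0) :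
    crs w (crs v₁ v₂) = 0 := by
  funext i
  have e1 : dt w v₁ = 0 := h1
  have e2 : dt w v₂ = 0 := h2
  simp only [dt] at e1 e2
  fin_cases i <;>
    simp only [Fin.zero_eta, Fin.mk_one, Fin.reduceFinMk, crs, Matrix.cons_val_zero,
      Matrix.cons_val_one, Matrix.head_cons, Matrix.cons_val_two, Matrix.tail_cons,
      Pi.zero_apply]
  all_goals try linear_combination v₁ 0 * e2 - v₂ 0 * e1
  all_goals try linear_combination v₁ 1 * e2 - v₂ 1 * e1
  all_goals try linear_combination v₁ 2 * e2 - v₂ 2 * e1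

/-- coordinate action of conjugation by `u` -/
def Tu (v : Fin 3 → F) : Fin 3 → F := ![v 0 - 2 * v 2, v 0 + v 1 - v 2, v 2]
/-- coordinate action of conjugation by `l` -/
def Tl (v : Fin 3 → F) : Fin 3 → F := ![v 0 + 2 * v 1, v 1, v 2 - v 0 - v 1]

lemma coord_core (hchar : (2 : F) ≠ 0) {v₁ v₂ : Fin 3 → F}
    (hLI : LinearIndependent F ![v₁, v₂])
    (hu1 : Tu v₁ ∈ Submodule.span F {v₁, v₂}) (hu2 : Tu v₂ ∈ Submodule.span F {v₁, v₂})
    (hl1 : Tl v₁ ∈ Submodule.span F {v₁, v₂}) (hl2 : Tl v₂ ∈ Submodule.span F {v₁, v₂}) :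
    False := by
  set f := crs v₁ v₂ with hfdef
  have hf : f ≠ 0 := crs_ne_zero hLI
  have dz : ∀ v : Fin 3 → F, v ∈ Submodule.span F {v₁, v₂} → dt f v = 0 := by
    intro v hv
    rw [Submodule.mem_span_pair] at hv
    obtain ⟨a, b, rfl⟩ := hv
    have hl := dt_crs_left v₁ v₂
    have hr := dt_crs_right v₁ v₂
    simp only [dt, Pi.add_apply, Pi.smul_apply, smul_eq_mul] at hl hr ⊢
    linear_combination a * hl + b * hr
  -- dual vectors
  set wu : Fin 3 → F := ![f 0 + f 1, f 1, -2 * f 0 - f 1 + f 2] with hwudef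
  set wl : Fin 3 → F := ![f 0 - f 2, 2 * f 0 + f 1 - f 2, f 2] with hwldef
  have hwu : ∀ v : Fin 3 → F, dt wu v = dt f (Tu v) := by
    intro v
    simp only [dt, Tu, hwudef, Matrix.cons_val_zero, Matrix.cons_val_one, Matrix.head_cons,
      Matrix.cons_val_two, Matrix.tail_cons]
    ring
  have hwl : ∀ v : Fin 3 → F, dt wl v = dt f (Tl v) := by
    intro v
    simp only [dt, Tl, hwldef, Matrix.cons_val_zero, Matrix.cons_val_one, Matrix.head_cons,
      Matrix.cons_val_two, Matrix.tail_cons]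
    ring
  have hcu : crs wu f = 0 := by
    rw [hfdef]
    exact crs_eq_zero_of_orth ((hwu v₁).trans (dz _ hu1)) ((hwu v₂).trans (dz _ hu2))
  have hcl : crs wl f = 0 := by
    rw [hfdef]
    exact crs_eq_zero_of_orth ((hwl v₁).trans (dz _ hl1)) ((hwl v₂).trans (dz _ hl2))
  have cu1 := congrFun hcu 1
  have cu2 := congrFun hcu 2
  have cl1 := congrFun hcl 1
  simp only [crs, hwudef, hwldef, Matrix.cons_val_zero, Matrix.cons_val_one, Matrix.head_cons,
    Matrix.cons_val_two, Matrix.tail_cons, Pi.zero_apply] at cu1 cu2 cl1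
  -- cu2 : (f 0 + f 1) * f 1 - f 1 * f 0 = 0  →  f 1 ^ 2 = 0
  have hf1 : f 1 = 0 := by
    have : f 1 * f 1 = 0 := by linear_combination cu2
    exact mul_self_eq_zero.mp this
  have hf0 : f 0 = 0 := by
    have h20 : (2 : F) * (f 0 * f 0) = 0 := by
      linear_combination (-1 : F) * cu1 - (f 0 + f 2) * hf1
    exact mul_self_eq_zero.mp ((mul_eq_zero.mp h20).resolve_left hchar)
  have hf2 : f 2 = 0 := by
    have : f 2 * f 2 = 0 := by linear_combination cl1
    exact mul_self_eq_zero.mp this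
  apply hf
  funext i
  fin_cases i <;> simp only [Fin.zero_eta, Fin.mk_one, Fin.reduceFinMk, Pi.zero_apply]
  · exact hf0
  · exact hf1
  · exact hf2

end Coord

/-! ### conjugation on the quotient -/

variable {ℓ : ℕ}
abbrev SL2 (ℓ : ℕ) := Matrix.SpecialLinearGroup (Fin 2) (ZMod ℓ)

lemma coe_inv_mul (g : SL2 ℓ) : ((g⁻¹ : SL2 ℓ) : MatF ℓ) * g = 1 := by
  rw [← Matrix.SpecialLinearGroup.coe_mul, inv_mul_cancel, Matrix.SpecialLinearGroup.coe_one]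

def conjM (g : SL2 ℓ) : MatF ℓ →ₗ[ZMod ℓ] MatF ℓ where
  toFun m := (g⁻¹ : SL2 ℓ) * m * (g : MatF ℓ)
  map_add' x y := by noncomm_ring
  map_smul' c x := by simp [Matrix.mul_smul, Matrix.smul_mul]

lemma conjM_apply (g : SL2 ℓ) (m : MatF ℓ) :
    conjM g m = (g⁻¹ : SL2 ℓ) * m * (g : MatF ℓ) := rfl

lemma conjM_le (g : SL2 ℓ) : scalarSub ℓ ≤ (scalarSub ℓ).comap (conjM g) := by
  rw [scalarSub, Submodule.span_le, Set.singleton_subset_iff]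
  simp only [SetLike.mem_coe, Submodule.mem_comap, conjM_apply, mul_one, coe_inv_mul]
  exact Submodule.mem_span_singleton_self _

def conjQ (g : SL2 ℓ) : QuotF ℓ →ₗ[ZMod ℓ] QuotF ℓ :=
  Submodule.mapQ _ _ (conjM g) (conjM_le g)

lemma conjQ_mk (g : SL2 ℓ) (m : MatF ℓ) :
    conjQ g (Submodule.Quotient.mk m) =
      Submodule.Quotient.mk ((g⁻¹ : SL2 ℓ) * m * (g : MatF ℓ)) :=
  Submodule.mapQ_apply _ _ _ _

lemma conjQ_conjQ (g : SL2 ℓ) (x : QuotF ℓ) : conjQ g⁻¹ (conjQ g x) = x := by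
  obtain ⟨m, rfl⟩ := Submodule.Quotient.mk_surjective _ x
  rw [conjQ_mk, conjQ_mk]
  congr 1
  rw [inv_inv]
  calc (g : MatF ℓ) * ((g⁻¹ : SL2 ℓ) * m * g) * (g⁻¹ : SL2 ℓ)
      = ((g : MatF ℓ) * (g⁻¹ : SL2 ℓ)) * m * ((g : MatF ℓ) * (g⁻¹ : SL2 ℓ)) := by noncomm_ring
    _ = m := by
        rw [← Matrix.SpecialLinearGroup.coe_mul, mul_inv_cancel,
          Matrix.SpecialLinearGroup.coe_one, one_mul, mul_one]

lemma conjQ_inj (g : SL2 ℓ) : Function.Injective (conjQ g) :=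
  Function.LeftInverse.injective (g := conjQ g⁻¹) (conjQ_conjQ g)

def uM : SL2 ℓ := ⟨!![1,1;0,1], by simp [Matrix.det_fin_two_of]⟩
def lM : SL2 ℓ := ⟨!![1,0;1,1], by simp [Matrix.det_fin_two_of]⟩

lemma conj_u (M : MatF ℓ) : (conjM uM) M =
    !![M 0 0 - M 1 0, M 0 0 + M 0 1 - M 1 0 - M 1 1;
       M 1 0, M 1 0 + M 1 1] := by
  rw [conjM_apply]
  have h1 : ((uM⁻¹ : SL2 ℓ) : MatF ℓ) = !![1,-1;0,1] := by
    rw [Matrix.SpecialLinearGroup.coe_inv]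
    show Matrix.adjugate !![1,1;0,1] = _
    rw [Matrix.adjugate_fin_two_of]; norm_num
  have h2 : ((uM : SL2 ℓ) : MatF ℓ) = !![1,1;0,1] := rfl
  rw [h1, h2, Matrix.eta_fin_two M, Matrix.mul_fin_two, Matrix.mul_fin_two]
  ext i j
  fin_cases i <;> fin_cases j <;> simp <;> ring

lemma conj_l (M : MatF ℓ) : (conjM lM) M =
    !![M 0 0 + M 0 1, M 0 1;
       M 1 0 - M 0 0 + M 1 1 - M 0 1, M 1 1 - M 0 1] := by
  rw [conjM_apply]
  have h1 : ((lM⁻¹ : SL2 ℓ) : MatF ℓ) = !![1,0;-1,1] := by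
    rw [Matrix.SpecialLinearGroup.coe_inv]
    show Matrix.adjugate !![1,0;1,1] = _
    rw [Matrix.adjugate_fin_two_of]; norm_num
  have h2 : ((lM : SL2 ℓ) : MatF ℓ) = !![1,0;1,1] := rfl
  rw [h1, h2, Matrix.eta_fin_two M, Matrix.mul_fin_two, Matrix.mul_fin_two]
  ext i j
  fin_cases i <;> fin_cases j <;> simp <;> ring

lemma span_helper {M N : MatF ℓ}
    (hmem : (Submodule.Quotient.mk N : QuotF ℓ) ∈
      Submodule.span (ZMod ℓ) {(Submodule.Quotient.mk M : QuotF ℓ)}) :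
    ∃ s t : ZMod ℓ, N = s • M + t • (1 : MatF ℓ) := by
  rw [Submodule.mem_span_singleton] at hmem
  obtain ⟨s, hs⟩ := hmem
  rw [← Submodule.Quotient.mk_smul, Submodule.Quotient.eq] at hs
  rw [scalarSub, Submodule.mem_span_singleton] at hs
  obtain ⟨t, ht⟩ := hs
  exact ⟨s, -t, by rw [neg_smul, ht]; abel⟩

lemma not_scalar_entries {M : MatF ℓ}
    (hx : (Submodule.Quotient.mk M : QuotF ℓ) ≠ 0) :
    ¬(M 0 1 = 0 ∧ M 1 0 = 0 ∧ M 0 0 = M 1 1) := by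
  rintro ⟨h1, h2, h3⟩
  apply hx
  rw [Submodule.Quotient.mk_eq_zero, scalarSub, Submodule.mem_span_singleton]
  refine ⟨M 0 0, ?_⟩
  rw [Matrix.eta_fin_two M, h1, h2, h3, Matrix.one_fin_two]
  ext i j; fin_cases i <;> fin_cases j <;> simp [h3]

/-! ### coordinates on the quotient -/

def phiM (ℓ : ℕ) : MatF ℓ →ₗ[ZMod ℓ] (Fin 3 → ZMod ℓ) where
  toFun M := ![M 0 0 - M 1 1, M 0 1, M 1 0]
  map_add' x y := by
    funext i
    fin_cases i <;>
      simp [Matrix.add_apply, Fin.zero_eta, Fin.mk_one, Fin.reduceFinMk] <;> ring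
  map_smul' c x := by
    funext i
    fin_cases i <;>
      simp [Matrix.smul_apply, smul_eq_mul, Fin.zero_eta, Fin.mk_one, Fin.reduceFinMk] <;> ring

lemma phiM_apply (M : MatF ℓ) : phiM ℓ M = ![M 0 0 - M 1 1, M 0 1, M 1 0] := rfl

lemma phiM_ker_le : scalarSub ℓ ≤ LinearMap.ker (phiM ℓ) := by
  rw [scalarSub, Submodule.span_le, Set.singleton_subset_iff]
  simp only [SetLike.mem_coe, LinearMap.mem_ker, phiM_apply]
  funext i
  fin_cases i <;> simp [Matrix.one_apply]

def phiQ (ℓ : ℕ) : QuotF ℓ →ₗ[ZMod ℓ] (Fin 3 → ZMod ℓ) :=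
  Submodule.liftQ _ (phiM ℓ) phiM_ker_le

lemma phiQ_mk (M : MatF ℓ) :
    phiQ ℓ (Submodule.Quotient.mk M) = ![M 0 0 - M 1 1, M 0 1, M 1 0] :=
  Submodule.liftQ_apply _ _ _

lemma phiQ_ker : LinearMap.ker (phiQ ℓ) = ⊥ := by
  rw [phiQ, Submodule.ker_liftQ_eq_bot]
  intro M hM
  simp only [LinearMap.mem_ker, phiM_apply] at hM
  have h0 := congrFun hM 0
  have h1 := congrFun hM 1
  have h2 := congrFun hM 2
  simp only [Matrix.cons_val_zero, Matrix.cons_val_one, Matrix.head_cons,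
    Matrix.cons_val_two, Matrix.tail_cons, Pi.zero_apply] at h0 h1 h2
  rw [scalarSub, Submodule.mem_span_singleton]
  refine ⟨M 0 0, ?_⟩
  rw [Matrix.eta_fin_two M, h1, h2, Matrix.one_fin_two]
  have h3 : M 1 1 = M 0 0 := by linear_combination -h0
  rw [h3]
  ext i j
  fin_cases i <;> fin_cases j <;> simp

lemma mem_span_pair_map {R A B : Type*} [CommRing R] [AddCommGroup A] [Module R A]
    [AddCommGroup B] [Module R B] (f : A →ₗ[R] B) {x y z : A}
    (h : z ∈ Submodule.span R {x, y}) : f z ∈ Submodule.span R {f x, f y} := by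
  rw [Submodule.mem_span_pair] at h ⊢
  obtain ⟨a, b, rfl⟩ := h
  exact ⟨a, b, by rw [← map_smul, ← map_smul, ← map_add]⟩


variable [Fact (Nat.Prime ℓ)]

lemma phiQ_conj_u (x : QuotF ℓ) : phiQ ℓ (conjQ uM x) = Tu (phiQ ℓ x) := by
  obtain ⟨M, rfl⟩ := Submodule.Quotient.mk_surjective _ x
  rw [conjQ_mk, ← conjM_apply, conj_u, phiQ_mk, phiQ_mk]
  funext i
  fin_cases i <;>
    simp [Tu, Fin.zero_eta, Fin.mk_one, Fin.reduceFinMk] <;> ring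

lemma phiQ_conj_l (x : QuotF ℓ) : phiQ ℓ (conjQ lM x) = Tl (phiQ ℓ x) := by
  obtain ⟨M, rfl⟩ := Submodule.Quotient.mk_surjective _ x
  rw [conjQ_mk, ← conjM_apply, conj_l, phiQ_mk, phiQ_mk]
  funext i
  fin_cases i <;>
    simp [Tl, Fin.zero_eta, Fin.mk_one, Fin.reduceFinMk] <;> ring



lemma exists_conj_line (hchar : (2 : ZMod ℓ) ≠ 0) (x : QuotF ℓ) (hx : x ≠ 0) :
    ∃ g : SL2 ℓ, conjQ g x ∉ Submodule.span (ZMod ℓ) {x} := by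
  obtain ⟨M, rfl⟩ := Submodule.Quotient.mk_surjective _ x
  have hns := not_scalar_entries hx
  by_cases hc : M 1 0 = 0
  · by_cases hb : M 0 1 = 0
    · have had : M 0 0 ≠ M 1 1 := fun h => hns ⟨hb, hc, h⟩
      refine ⟨uM, fun hmem => ?_⟩
      rw [conjQ_mk, ← conjM_apply, conj_u] at hmem
      obtain ⟨s, t, E⟩ := span_helper hmem
      have e01 := congrFun (congrFun E 0) 1
      simp [Matrix.add_apply, Matrix.smul_apply, Matrix.one_apply, smul_eq_mul] at e01
      exact had (by linear_combination e01 + (s-1) * hb + hc)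
    · refine ⟨lM, fun hmem => ?_⟩
      rw [conjQ_mk, ← conjM_apply, conj_l] at hmem
      obtain ⟨s, t, E⟩ := span_helper hmem
      have e01 := congrFun (congrFun E 0) 1
      have e00 := congrFun (congrFun E 0) 0
      have e11 := congrFun (congrFun E 1) 1
      simp [Matrix.add_apply, Matrix.smul_apply, Matrix.one_apply, smul_eq_mul] at e01 e00 e11
      have hs : s = 1 := by
        have h0 : (s - 1) * M 0 1 = 0 := by linear_combination -e01
        rcases mul_eq_zero.mp h0 with h | h
        · exact sub_eq_zero.mp h
        · exact absurd h hb
      have h2 : (2 : ZMod ℓ) * M 0 1 = 0 := by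
        linear_combination e00 - e11 + (M 0 0 - M 1 1) * hs
      exact hb ((mul_eq_zero.mp h2).resolve_left hchar)
  · refine ⟨uM, fun hmem => ?_⟩
    rw [conjQ_mk, ← conjM_apply, conj_u] at hmem
    obtain ⟨s, t, E⟩ := span_helper hmem
    have e10 := congrFun (congrFun E 1) 0
    have e00 := congrFun (congrFun E 0) 0
    have e11 := congrFun (congrFun E 1) 1
    simp [Matrix.add_apply, Matrix.smul_apply, Matrix.one_apply, smul_eq_mul] at e10 e00 e11
    have hs : s = 1 := by
      have h0 : (s - 1) * M 1 0 = 0 := by linear_combination -e10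
      rcases mul_eq_zero.mp h0 with h | h
      · exact sub_eq_zero.mp h
      · exact absurd h hc
    have h2 : (2 : ZMod ℓ) * M 1 0 = 0 := by
      linear_combination e11 - e00 - (M 0 0 - M 1 1) * hs
    exact hc ((mul_eq_zero.mp h2).resolve_left hchar)

lemma exists_conj_plane (hchar : (2 : ZMod ℓ) ≠ 0) (x₁ x₂ : QuotF ℓ)
    (hLI : LinearIndependent (ZMod ℓ) ![x₁, x₂]) :
    ∃ g : SL2 ℓ, ¬(conjQ g x₁ ∈ Submodule.span (ZMod ℓ) {x₁, x₂} ∧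
      conjQ g x₂ ∈ Submodule.span (ZMod ℓ) {x₁, x₂}) := by
  by_contra hcon
  push_neg at hcon
  have hu := hcon uM
  have hl := hcon lM
  have hv : LinearIndependent (ZMod ℓ) ![phiQ ℓ x₁, phiQ ℓ x₂] := by
    have := hLI.map' (phiQ ℓ) phiQ_ker
    have he : (phiQ ℓ) ∘ ![x₁, x₂] = ![phiQ ℓ x₁, phiQ ℓ x₂] := by
      funext i; fin_cases i <;> rfl
    rwa [he] at this
  refine coord_core hchar hv ?_ ?_ ?_ ?_
  · rw [← phiQ_conj_u]; exact mem_span_pair_map _ hu.1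
  · rw [← phiQ_conj_u]; exact mem_span_pair_map _ hu.2
  · rw [← phiQ_conj_l]; exact mem_span_pair_map _ hl.1
  · rw [← phiQ_conj_l]; exact mem_span_pair_map _ hl.2

section Dep
variable {K V : Type*} [Field K] [AddCommGroup V] [Module K V]

lemma dep2 {x₁ x₂ : V} (hx₁ : x₁ ≠ 0) (h : ¬ LinearIndependent K ![x₁, x₂]) :
    x₂ ∈ Submodule.span K {x₁} := by
  rw [linearIndependent_fin2, not_and_or] at h
  simp only [Matrix.cons_val_one, Matrix.head_cons, Matrix.cons_val_zero] at h
  rcases h with h | h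
  · push_neg at h; rw [h]; exact zero_mem _
  · push_neg at h
    obtain ⟨a, ha⟩ := h
    have ha0 : a ≠ 0 := by rintro rfl; rw [zero_smul] at ha; exact hx₁ ha.symm
    rw [Submodule.mem_span_singleton]
    exact ⟨a⁻¹, by rw [← ha, smul_smul, inv_mul_cancel₀ ha0, one_smul]⟩

lemma dep3 {x₁ x₂ x₃ : V} (h12 : LinearIndependent K ![x₁, x₂])
    (h : ¬ LinearIndependent K ![x₁, x₂, x₃]) : x₃ ∈ Submodule.span K {x₁, x₂} := by
  by_contra hns
  apply h
  have hr : Set.range ![x₁, x₂] = {x₁, x₂} := by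
    rw [Matrix.range_cons, Matrix.range_cons_empty]; rfl
  have hcons : LinearIndependent K (Fin.cons x₃ ![x₁, x₂] : Fin 3 → V) :=
    h12.fin_cons (by rwa [hr])
  have he : ![x₁, x₂, x₃] = (Fin.cons x₃ ![x₁, x₂] : Fin 3 → V) ∘ ![1, 2, 0] := by
    funext i; fin_cases i <;> rfl
  rw [he]
  exact hcons.comp _ (by decide)

end Dep

end Stmt4

open Finset in
open scoped Classical in
/-- Let `ℓ > 2` be a prime and let `α₁, α₂, α₃` be independent
random elements of `Q_ℓ`, each supported on nonzero elements and each having an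
`SL₂(F_ℓ)`-invariant distribution under conjugation (the map `cg` below is the
map of `Q_ℓ` induced by `x ↦ g⁻¹ x g`).  Then `(α₁, α₂, α₃)` is an `F_ℓ`-basis
of `Q_ℓ` (equivalently, linearly independent) with probability at least `1/8`. -/
theorem stmt_4 (ℓ : ℕ) (hℓ : Nat.Prime ℓ) (hℓ2 : 2 < ℓ)
    (ν : Fin 3 → QuotF ℓ → ℝ)
    (hpos : ∀ i x, 0 ≤ ν i x)
    (hsum : ∀ i, ∑' x, ν i x = 1)
    (hzero : ∀ i, ν i 0 = 0)
    (hinv : ∀ (i : Fin 3) (g : Matrix.SpecialLinearGroup (Fin 2) (ZMod ℓ))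
      (cg : QuotF ℓ → QuotF ℓ),
      (∀ m : MatF ℓ, cg (Submodule.Quotient.mk m) =
        Submodule.Quotient.mk
          (((g⁻¹ : Matrix.SpecialLinearGroup (Fin 2) (ZMod ℓ)) : MatF ℓ) * m * (g : MatF ℓ))) →
      ∀ x, ν i (cg x) = ν i x) :
    (1 : ℝ) / 8 ≤ ∑' x₁, ∑' x₂, ∑' x₃,
      (if LinearIndependent (ZMod ℓ) ![x₁, x₂, x₃] then ν 0 x₁ * ν 1 x₂ * ν 2 x₃ else 0) := by
  classical
  haveI : Fact (Nat.Prime ℓ) := ⟨hℓ⟩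
  haveI : NeZero ℓ := ⟨by omega⟩
  haveI : Fintype (QuotF ℓ) := Fintype.ofFinite _
  have hchar : (2 : ZMod ℓ) ≠ 0 := by
    have h2 : ((2 : ℕ) : ZMod ℓ) ≠ 0 := by
      rw [Ne, ZMod.natCast_eq_zero_iff]
      intro hdvd
      have := Nat.le_of_dvd (by norm_num) hdvd
      omega
    exact_mod_cast h2
  have hsum' : ∀ i, ∑ x : QuotF ℓ, ν i x = 1 := fun i => by
    rw [← hsum i, tsum_fintype]
  have hν : ∀ (i : Fin 3) (g : Stmt4.SL2 ℓ) (x : QuotF ℓ),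
      ν i (Stmt4.conjQ g x) = ν i x :=
    fun i g x => hinv i g (Stmt4.conjQ g) (fun m => Stmt4.conjQ_mk g m) x
  have hle1 : ∀ (i : Fin 3) (S : Finset (QuotF ℓ)), ∑ x ∈ S, ν i x ≤ 1 := by
    intro i S
    rw [← hsum' i]
    exact Finset.sum_le_sum_of_subset_of_nonneg (Finset.subset_univ S)
      (fun x _ _ => hpos i x)
  -- reduction to the set of nonzero elements of a submodule
  have hAeq : ∀ (i : Fin 3) (W : Submodule (ZMod ℓ) (QuotF ℓ)),
      ∑ y ∈ univ.filter (fun y => y ∈ W), ν i y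
        = ∑ y ∈ univ.filter (fun y => y ∈ W ∧ y ≠ 0), ν i y := by
    intro i W
    refine (Finset.sum_subset ?_ ?_).symm
    · intro y hy
      simp only [Finset.mem_filter, Finset.mem_univ, true_and] at hy ⊢
      exact hy.1
    · intro y hy hyn
      simp only [Finset.mem_filter, Finset.mem_univ, true_and] at hy hyn
      push_neg at hyn
      rw [hyn hy]
      exact hzero i
  -- invariance of such sums under conjugation
  have hBsum : ∀ (i : Fin 3) (g : Stmt4.SL2 ℓ) (A : Finset (QuotF ℓ)),
      ∑ y ∈ A.image (Stmt4.conjQ g), ν i y = ∑ y ∈ A, ν i y := by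
    intro i g A
    rw [Finset.sum_image (fun x _ y _ h => Stmt4.conjQ_inj g h)]
    exact Finset.sum_congr rfl fun x _ => hν i g x
  -- the line bound
  have lineBound : ∀ (i : Fin 3) (z : QuotF ℓ), z ≠ 0 →
      ∑ y ∈ univ.filter (fun y => y ∈ Submodule.span (ZMod ℓ) {z}), ν i y ≤ 1 / 2 := by
    intro i z hz
    obtain ⟨g, hg⟩ := Stmt4.exists_conj_line hchar z hz
    set L : Submodule (ZMod ℓ) (QuotF ℓ) := Submodule.span (ZMod ℓ) {z} with hL
    set A : Finset (QuotF ℓ) := univ.filter (fun y => y ∈ L ∧ y ≠ 0) with hA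
    have hdisj : Disjoint A (A.image (Stmt4.conjQ g)) := by
      rw [Finset.disjoint_left]
      intro y hy hyB
      rw [Finset.mem_image] at hyB
      obtain ⟨w, hw, rfl⟩ := hyB
      simp only [hA, Finset.mem_filter, Finset.mem_univ, true_and] at hy hw
      obtain ⟨c, hc⟩ := Submodule.mem_span_singleton.mp hw.1
      have hc0 : c ≠ 0 := by
        rintro rfl; rw [zero_smul] at hc; exact hw.2 hc.symm
      apply hg
      have hcz : Stmt4.conjQ g z = c⁻¹ • Stmt4.conjQ g w := by
        rw [← hc, map_smul, smul_smul, inv_mul_cancel₀ hc0, one_smul]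
      rw [hcz]
      exact Submodule.smul_mem _ _ hy.1
    have hsplit : ∑ y ∈ A, ν i y + ∑ y ∈ A.image (Stmt4.conjQ g), ν i y ≤ 1 := by
      rw [← Finset.sum_union hdisj]; exact hle1 i _
    have := hBsum i g A
    have := hAeq i L
    linarith
  -- the plane bound
  have planeBound : ∀ (i : Fin 3) (x₁ x₂ : QuotF ℓ),
      LinearIndependent (ZMod ℓ) ![x₁, x₂] →
      ∑ y ∈ univ.filter (fun y => y ∈ Submodule.span (ZMod ℓ) {x₁, x₂}), ν i y ≤ 3 / 4 := by
    intro i x₁ x₂ h12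
    obtain ⟨g, hg⟩ := Stmt4.exists_conj_plane hchar x₁ x₂ h12
    set W : Submodule (ZMod ℓ) (QuotF ℓ) := Submodule.span (ZMod ℓ) {x₁, x₂} with hW
    set W' : Submodule (ZMod ℓ) (QuotF ℓ) := W.map (Stmt4.conjQ g) with hW'
    set A : Finset (QuotF ℓ) := univ.filter (fun y => y ∈ W ∧ y ≠ 0) with hA
    set B : Finset (QuotF ℓ) := A.image (Stmt4.conjQ g) with hB
    have hABmem : ∀ y ∈ A ∩ B, y ∈ W ∧ y ≠ 0 ∧ y ∈ W' := by
      intro y hy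
      rw [Finset.mem_inter] at hy
      obtain ⟨hyA, hyB⟩ := hy
      rw [hB, Finset.mem_image] at hyB
      obtain ⟨w, hw, rfl⟩ := hyB
      simp only [hA, Finset.mem_filter, Finset.mem_univ, true_and] at hyA hw
      exact ⟨hyA.1, hyA.2, Submodule.mem_map_of_mem hw.1⟩
    have hABle : ∑ y ∈ A ∩ B, ν i y ≤ 1 / 2 := by
      rcases Finset.eq_empty_or_nonempty (A ∩ B) with he | hne
      · rw [he, Finset.sum_empty]; norm_num
      · obtain ⟨z₀, hz₀⟩ := hne
        obtain ⟨hzW, hz0, hzW'⟩ := hABmem z₀ hz₀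
        -- every element of A ∩ B lies in the line through z₀
        have hclaim : ∀ y ∈ A ∩ B, y ∈ Submodule.span (ZMod ℓ) {z₀} := by
          intro y hy
          by_contra hyns
          obtain ⟨hyW, hy0, hyW'⟩ := hABmem y hy
          have ynspan : ∀ c : ZMod ℓ, c • z₀ ≠ y := by
            intro c hc
            exact hyns (Submodule.mem_span_singleton.mpr ⟨c, hc⟩)
          obtain ⟨a₁, a₂, hz⟩ := Submodule.mem_span_pair.mp hzW
          obtain ⟨b₁, b₂, hy'⟩ := Submodule.mem_span_pair.mp hyW
          have e1 : b₂ • z₀ - a₂ • y = (a₁ * b₂ - a₂ * b₁) • x₁ := by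
            rw [← hz, ← hy']; module
          have e2 : b₁ • z₀ - a₁ • y = (-(a₁ * b₂ - a₂ * b₁)) • x₂ := by
            rw [← hz, ← hy']; module
          have hD : a₁ * b₂ - a₂ * b₁ ≠ 0 := by
            intro hD0
            rw [hD0, zero_smul, sub_eq_zero] at e1
            rw [hD0, neg_zero, zero_smul, sub_eq_zero] at e2
            by_cases ha1 : a₁ = 0
            · by_cases ha2 : a₂ = 0
              · apply hz0
                rw [← hz, ha1, ha2, zero_smul, zero_smul, add_zero]
              · exact ynspan (a₂⁻¹ * b₂) (by
                  rw [mul_smul, e1, smul_smul, inv_mul_cancel₀ ha2, one_smul])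
            · exact ynspan (a₁⁻¹ * b₁) (by
                rw [mul_smul, e2, smul_smul, inv_mul_cancel₀ ha1, one_smul])
          have hx₁W' : x₁ ∈ W' := by
            have : x₁ = (a₁ * b₂ - a₂ * b₁)⁻¹ • (b₂ • z₀ - a₂ • y) := by
              rw [e1, smul_smul, inv_mul_cancel₀ hD, one_smul]
            rw [this]
            exact Submodule.smul_mem _ _ (Submodule.sub_mem _
              (Submodule.smul_mem _ _ hzW') (Submodule.smul_mem _ _ hyW'))
          have hx₂W' : x₂ ∈ W' := by
            have : x₂ = (-(a₁ * b₂ - a₂ * b₁))⁻¹ • (b₁ • z₀ - a₁ • y) := by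
              rw [e2, smul_smul, inv_mul_cancel₀ (neg_ne_zero.mpr hD), one_smul]
            rw [this]
            exact Submodule.smul_mem _ _ (Submodule.sub_mem _
              (Submodule.smul_mem _ _ hzW') (Submodule.smul_mem _ _ hyW'))
          have hWle : W ≤ W' := by
            rw [hW, Submodule.span_le]
            intro t ht
            rcases ht with rfl | ht
            · exact hx₁W'
            · rw [Set.mem_singleton_iff] at ht; subst ht; exact hx₂W'
          have hset : (W : Set (QuotF ℓ)) = (W' : Set (QuotF ℓ)) := by
            refine Set.eq_of_subset_of_ncard_le hWle ?_ (Set.toFinite _)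
            rw [hW', Submodule.map_coe, Set.ncard_image_of_injective _ (Stmt4.conjQ_inj g)]
          apply hg
          constructor
          · have hmm : Stmt4.conjQ g x₁ ∈ W' :=
              Submodule.mem_map_of_mem (Submodule.subset_span (by simp))
            rwa [← SetLike.mem_coe, ← hset, SetLike.mem_coe] at hmm
          · have hmm : Stmt4.conjQ g x₂ ∈ W' :=
              Submodule.mem_map_of_mem (Submodule.subset_span (by simp))
            rwa [← SetLike.mem_coe, ← hset, SetLike.mem_coe] at hmm
        have hsub : A ∩ B ⊆ univ.filter (fun y => y ∈ Submodule.span (ZMod ℓ) {z₀}) := by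
          intro y hy
          simp only [Finset.mem_filter, Finset.mem_univ, true_and]
          exact hclaim y hy
        exact le_trans (Finset.sum_le_sum_of_subset_of_nonneg hsub
          (fun x _ _ => hpos i x)) (lineBound i z₀ hz0)
    have hsplit : ∑ y ∈ A ∪ B, ν i y + ∑ y ∈ A ∩ B, ν i y
        = ∑ y ∈ A, ν i y + ∑ y ∈ B, ν i y := Finset.sum_union_inter
    have h1 : ∑ y ∈ A ∪ B, ν i y ≤ 1 := hle1 i _
    have h2 := hBsum i g A
    have h3 := hAeq i W
    rw [← hB] at h2
    linarith
  -- dropping zero from the first variable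
  have hzero_sum : ∀ i : Fin 3,
      ∑ x ∈ univ.filter (fun x : QuotF ℓ => x ≠ 0), ν i x = 1 := by
    intro i
    rw [← hsum' i]
    refine Finset.sum_subset (Finset.filter_subset _ _) ?_
    intro x _ hxn
    simp only [Finset.mem_filter, Finset.mem_univ, true_and, not_not] at hxn
    rw [hxn]; exact hzero i
  -- now the main computation
  simp only [tsum_fintype]
  have hsplit : ∀ x₁ x₂ : QuotF ℓ,
      (∑ x₃, if LinearIndependent (ZMod ℓ) ![x₁, x₂, x₃]
        then ν 0 x₁ * ν 1 x₂ * ν 2 x₃ else 0)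
      = ν 0 x₁ * (ν 1 x₂ *
          ∑ x₃, if LinearIndependent (ZMod ℓ) ![x₁, x₂, x₃] then ν 2 x₃ else 0) := by
    intro x₁ x₂
    rw [Finset.mul_sum, Finset.mul_sum]
    refine Finset.sum_congr rfl fun x₃ _ => ?_
    rw [mul_ite, mul_zero, mul_ite, mul_zero, mul_assoc]
  simp only [hsplit]
  have hPnonneg : ∀ x₁ x₂ : QuotF ℓ,
      0 ≤ ∑ x₃, if LinearIndependent (ZMod ℓ) ![x₁, x₂, x₃] then ν 2 x₃ else 0 := by
    intro x₁ x₂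
    refine Finset.sum_nonneg fun x₃ _ => ?_
    split
    · exact hpos 2 x₃
    · exact le_rfl
  have hP : ∀ x₁ x₂ : QuotF ℓ, LinearIndependent (ZMod ℓ) ![x₁, x₂] →
      1 / 4 ≤ ∑ x₃, if LinearIndependent (ZMod ℓ) ![x₁, x₂, x₃] then ν 2 x₃ else 0 := by
    intro x₁ x₂ h12
    rw [← Finset.sum_filter]
    have hsplit2 := Finset.sum_filter_add_sum_filter_not Finset.univ
      (fun x₃ => LinearIndependent (ZMod ℓ) ![x₁, x₂, x₃]) (ν 2)
    have hbad : ∑ x₃ ∈ univ.filter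
        (fun x₃ => ¬ LinearIndependent (ZMod ℓ) ![x₁, x₂, x₃]), ν 2 x₃ ≤ 3 / 4 := by
      refine le_trans (Finset.sum_le_sum_of_subset_of_nonneg ?_
        (fun x _ _ => hpos 2 x)) (planeBound 2 x₁ x₂ h12)
      intro x hx
      simp only [Finset.mem_filter, Finset.mem_univ, true_and] at hx ⊢
      exact Stmt4.dep3 h12 hx
    have hone := hsum' 2
    linarith
  have hinner : ∀ x₁ : QuotF ℓ, x₁ ≠ 0 →
      1 / 8 ≤ ∑ x₂, ν 1 x₂ *
        ∑ x₃, (if LinearIndependent (ZMod ℓ) ![x₁, x₂, x₃] then ν 2 x₃ else 0) := by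
    intro x₁ hx₁
    have hgood : 1 / 2 ≤ ∑ x₂ ∈ univ.filter
        (fun x₂ => LinearIndependent (ZMod ℓ) ![x₁, x₂]), ν 1 x₂ := by
      have hsplit2 := Finset.sum_filter_add_sum_filter_not Finset.univ
        (fun x₂ => LinearIndependent (ZMod ℓ) ![x₁, x₂]) (ν 1)
      have hbad : ∑ x₂ ∈ univ.filter
          (fun x₂ => ¬ LinearIndependent (ZMod ℓ) ![x₁, x₂]), ν 1 x₂ ≤ 1 / 2 := by
        refine le_trans (Finset.sum_le_sum_of_subset_of_nonneg ?_
          (fun x _ _ => hpos 1 x)) (lineBound 1 x₁ hx₁)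
        intro x hx
        simp only [Finset.mem_filter, Finset.mem_univ, true_and] at hx ⊢
        exact Stmt4.dep2 hx₁ hx
      have hone := hsum' 1
      linarith
    calc (1 : ℝ) / 8 = 1 / 4 * (1 / 2) := by norm_num
      _ ≤ 1 / 4 * ∑ x₂ ∈ univ.filter
            (fun x₂ => LinearIndependent (ZMod ℓ) ![x₁, x₂]), ν 1 x₂ := by
          have := mul_le_mul_of_nonneg_left hgood (by norm_num : (0:ℝ) ≤ 1 / 4)
          linarith
      _ = ∑ x₂ ∈ univ.filter
            (fun x₂ => LinearIndependent (ZMod ℓ) ![x₁, x₂]), 1 / 4 * ν 1 x₂ :=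
          Finset.mul_sum _ _ _
      _ ≤ ∑ x₂ ∈ univ.filter
            (fun x₂ => LinearIndependent (ZMod ℓ) ![x₁, x₂]),
            ν 1 x₂ * ∑ x₃, (if LinearIndependent (ZMod ℓ) ![x₁, x₂, x₃]
              then ν 2 x₃ else 0) := by
          refine Finset.sum_le_sum fun x₂ hx₂ => ?_
          simp only [Finset.mem_filter, Finset.mem_univ, true_and] at hx₂
          calc 1 / 4 * ν 1 x₂ = ν 1 x₂ * (1 / 4) := by ring
            _ ≤ ν 1 x₂ * ∑ x₃, (if LinearIndependent (ZMod ℓ) ![x₁, x₂, x₃]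
                  then ν 2 x₃ else 0) :=
                mul_le_mul_of_nonneg_left (hP x₁ x₂ hx₂) (hpos 1 x₂)
      _ ≤ ∑ x₂, ν 1 x₂ * ∑ x₃, (if LinearIndependent (ZMod ℓ) ![x₁, x₂, x₃]
            then ν 2 x₃ else 0) := by
          refine Finset.sum_le_sum_of_subset_of_nonneg (Finset.subset_univ _) ?_
          intro x _ _
          exact mul_nonneg (hpos 1 x) (hPnonneg x₁ x)
  have hinner_nonneg : ∀ x₁ : QuotF ℓ,
      0 ≤ ∑ x₂, ν 1 x₂ *
        ∑ x₃, (if LinearIndependent (ZMod ℓ) ![x₁, x₂, x₃] then ν 2 x₃ else 0) := by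
    intro x₁
    exact Finset.sum_nonneg fun x₂ _ => mul_nonneg (hpos 1 x₂) (hPnonneg x₁ x₂)
  simp only [← Finset.mul_sum]
  calc (1 : ℝ) / 8
      = ∑ x₁ ∈ univ.filter (fun x₁ : QuotF ℓ => x₁ ≠ 0), ν 0 x₁ * (1 / 8) := by
        rw [← Finset.sum_mul, hzero_sum 0, one_mul]
    _ ≤ ∑ x₁ ∈ univ.filter (fun x₁ : QuotF ℓ => x₁ ≠ 0),
          ν 0 x₁ * ∑ x₂, ν 1 x₂ *
            ∑ x₃, (if LinearIndependent (ZMod ℓ) ![x₁, x₂, x₃] then ν 2 x₃ else 0) := by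
        refine Finset.sum_le_sum fun x₁ hx₁ => ?_
        simp only [Finset.mem_filter, Finset.mem_univ, true_and] at hx₁
        exact mul_le_mul_of_nonneg_left (hinner x₁ hx₁) (hpos 0 x₁)
    _ ≤ ∑ x₁, ν 0 x₁ * ∑ x₂, ν 1 x₂ *
          ∑ x₃, (if LinearIndependent (ZMod ℓ) ![x₁, x₂, x₃] then ν 2 x₃ else 0) := by
        refine Finset.sum_le_sum_of_subset_of_nonneg (Finset.subset_univ _) ?_
        intro x _ _
        exact mul_nonneg (hpos 0 x) (hinner_nonneg x)
end

section
/- Let ℓ > 2 be a prime number and let ε ≥ 0. Let α₁, α₂, α₃ be independent random elements of Q_ℓ, each supported on nonzero elements and each having a distribution that is ε-close to SL₂(F_ℓ)-invariant (under conjugation). Then (α₁, α₂, α₃) is an F_ℓ-basis of Q_ℓ with probability at least 1/8 − 3ε. -/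
abbrev SL (ℓ : ℕ) := Matrix.SpecialLinearGroup (Fin 2) (ZMod ℓ)

variable (ℓ : ℕ)

lemma mem_scalarSub_iff (x : MatF ℓ) :
    x ∈ scalarSub ℓ ↔ x 0 1 = 0 ∧ x 1 0 = 0 ∧ x 0 0 = x 1 1 := by
  rw [scalarSub, Submodule.mem_span_singleton]
  constructor
  · rintro ⟨a, rfl⟩
    simp [Matrix.smul_apply, Matrix.one_apply]
  · rintro ⟨h1, h2, h3⟩
    refine ⟨x 0 0, ?_⟩
    ext i j
    fin_cases i <;> fin_cases j <;>
      simp_all [Matrix.smul_apply, Matrix.one_apply]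

lemma zmodTwoNeZero (hℓ2 : 2 < ℓ) : (2 : ZMod ℓ) ≠ 0 := by
  have : ((2:ℕ) : ZMod ℓ) ≠ 0 := by
    haveI : NeZero ℓ := ⟨by omega⟩
    rw [Ne, ZMod.natCast_eq_zero_iff]
    intro h
    exact absurd (Nat.le_of_dvd (by norm_num) h) (by omega)
  simpa using this

lemma lemA [Fact (Nat.Prime ℓ)] (hℓ2 : 2 < ℓ) (x : MatF ℓ) (hx : x ∉ scalarSub ℓ) :
    ∃ g : SL ℓ, ∀ α β : ZMod ℓ,
      ((g⁻¹ : SL ℓ) : MatF ℓ) * x * (g : MatF ℓ) ≠ α • x + β • 1 := by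
  have htwo : (2 : ZMod ℓ) ≠ 0 := zmodTwoNeZero ℓ hℓ2
  obtain ⟨a, b, c, d, rfl⟩ : ∃ a b c d, x = !![a, b; c, d] :=
    ⟨_, _, _, _, Matrix.eta_fin_two x⟩
  rw [mem_scalarSub_iff] at hx
  push_neg at hx
  have hx' : b = 0 → c = 0 → a ≠ d := by
    intro h1 h2 h3
    exact hx (by simpa using h1) (by simpa using h2) (by simpa using h3)
  clear hx
  by_cases hbz : b = 0
  · -- use u = !![1,1;0,1]
    refine ⟨⟨!![1,1;0,1], by simp [Matrix.det_fin_two_of]⟩, ?_⟩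
    intro α β heq
    have hinv : ((⟨!![1,1;0,1], by simp [Matrix.det_fin_two_of]⟩ : SL ℓ)⁻¹ : SL ℓ)
        = ⟨!![1,-1;0,1], by simp [Matrix.det_fin_two_of]⟩ := by
      refine inv_eq_of_mul_eq_one_right (Subtype.ext ?_)
      show !![1,1;0,1] * !![1,-1;0,1] = (1 : MatF ℓ)
      ext i j
      fin_cases i <;> fin_cases j <;>
        simp [Matrix.SpecialLinearGroup.coe_mul, Matrix.mul_apply, Fin.sum_univ_two]
    rw [hinv] at heq
    have h11 := congrFun (congrFun heq 0) 0
    have h12 := congrFun (congrFun heq 0) 1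
    have h21 := congrFun (congrFun heq 1) 0
    have h22 := congrFun (congrFun heq 1) 1
    simp [Matrix.mul_apply, Fin.sum_univ_two, Matrix.one_apply, Matrix.vecMul, Matrix.vecHead,
      Matrix.vecTail, dotProduct] at h11 h12 h21 h22
    by_cases hc0 : c = 0
    · have had : a ≠ d := hx' hbz hc0
      exact had (by linear_combination h12 + (α - 1) * hbz + hc0)
    · have h2 : (2 : ZMod ℓ) * c ^ 2 = 0 := by
        linear_combination (-c) * h11 + c * h22 + (a - d) * h21
      rcases mul_eq_zero.mp h2 with h | h
      · exact htwo h
      · exact hc0 ((pow_eq_zero_iff two_ne_zero).mp h)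
  · -- use l = !![1,0;1,1]
    refine ⟨⟨!![1,0;1,1], by simp [Matrix.det_fin_two_of]⟩, ?_⟩
    intro α β heq
    have hinv : ((⟨!![1,0;1,1], by simp [Matrix.det_fin_two_of]⟩ : SL ℓ)⁻¹ : SL ℓ)
        = ⟨!![1,0;-1,1], by simp [Matrix.det_fin_two_of]⟩ := by
      refine inv_eq_of_mul_eq_one_right (Subtype.ext ?_)
      show !![1,0;1,1] * !![1,0;-1,1] = (1 : MatF ℓ)
      ext i j
      fin_cases i <;> fin_cases j <;>
        simp [Matrix.SpecialLinearGroup.coe_mul, Matrix.mul_apply, Fin.sum_univ_two]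
    rw [hinv] at heq
    have h11 := congrFun (congrFun heq 0) 0
    have h12 := congrFun (congrFun heq 0) 1
    have h22 := congrFun (congrFun heq 1) 1
    simp [Matrix.mul_apply, Fin.sum_univ_two, Matrix.one_apply, Matrix.vecMul, Matrix.vecHead,
      Matrix.vecTail, dotProduct] at h11 h12 h22
    have h2 : (2 : ZMod ℓ) * b ^ 2 = 0 := by
      linear_combination b * h11 - b * h22 - (a - d) * h12
    rcases mul_eq_zero.mp h2 with h | h
    · exact htwo h
    · exact hbz ((pow_eq_zero_iff two_ne_zero).mp h)
open Matrix in
def traceForm : MatF ℓ →ₗ[ZMod ℓ] MatF ℓ →ₗ[ZMod ℓ] ZMod ℓ :=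
  LinearMap.mk₂ (ZMod ℓ) (fun z y => 2 * (z * y).trace - z.trace * y.trace)
    (by intro m₁ m₂ n; simp [add_mul, Matrix.trace_add]; ring)
    (by intro c m n; simp [Matrix.smul_mul, Matrix.trace_smul]; ring)
    (by intro m n₁ n₂; simp [mul_add, Matrix.trace_add]; ring)
    (by intro c m n; simp [Matrix.mul_smul, Matrix.trace_smul]; ring)

lemma traceForm_one_right (z : MatF ℓ) : traceForm ℓ z 1 = 0 := by
  simp [traceForm, Matrix.trace_one]
  ring

lemma traceForm_one_left (y : MatF ℓ) : traceForm ℓ 1 y = 0 := by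
  simp [traceForm, Matrix.trace_one]

lemma traceForm_scalar_right (z : MatF ℓ) : scalarSub ℓ ≤ LinearMap.ker (traceForm ℓ z) := by
  rw [scalarSub, Submodule.span_le, Set.singleton_subset_iff]
  simpa using traceForm_one_right ℓ z

noncomputable def qFormAux : MatF ℓ →ₗ[ZMod ℓ] (QuotF ℓ →ₗ[ZMod ℓ] ZMod ℓ) where
  toFun z := Submodule.liftQ _ (traceForm ℓ z) (traceForm_scalar_right ℓ z)
  map_add' z₁ z₂ := by
    apply LinearMap.ext
    intro y
    obtain ⟨y, rfl⟩ := Submodule.Quotient.mk_surjective _ y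
    simp
  map_smul' c z := by
    apply LinearMap.ext
    intro y
    obtain ⟨y, rfl⟩ := Submodule.Quotient.mk_surjective _ y
    simp

noncomputable def qForm : QuotF ℓ →ₗ[ZMod ℓ] (QuotF ℓ →ₗ[ZMod ℓ] ZMod ℓ) :=
  Submodule.liftQ _ (qFormAux ℓ) (by
    refine Submodule.span_le.2 (Set.singleton_subset_iff.2 ?_)
    simp only [SetLike.mem_coe, LinearMap.mem_ker]
    apply LinearMap.ext
    intro y
    obtain ⟨y, rfl⟩ := Submodule.Quotient.mk_surjective _ y
    simpa [qFormAux] using traceForm_one_left ℓ y)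

lemma qForm_mk (z y : MatF ℓ) :
    qForm ℓ (Submodule.Quotient.mk z) (Submodule.Quotient.mk y)
      = 2 * (z * y).trace - z.trace * y.trace := rfl

lemma qForm_nondeg [Fact (Nat.Prime ℓ)] (hℓ2 : 2 < ℓ) (z : QuotF ℓ) (h : ∀ y, qForm ℓ z y = 0) : z = 0 := by
  have htwo : (2 : ZMod ℓ) ≠ 0 := by
    haveI : NeZero ℓ := ⟨by omega⟩
    have : ((2:ℕ) : ZMod ℓ) ≠ 0 := by
      rw [Ne, ZMod.natCast_eq_zero_iff]
      intro hdvd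
      exact absurd (Nat.le_of_dvd (by norm_num) hdvd) (by omega)
    simpa using this
  obtain ⟨z, rfl⟩ := Submodule.Quotient.mk_surjective _ z
  rw [Submodule.Quotient.mk_eq_zero, mem_scalarSub_iff]
  have h1 := h (Submodule.Quotient.mk !![0,1;0,0])
  have h2 := h (Submodule.Quotient.mk !![0,0;1,0])
  have h3 := h (Submodule.Quotient.mk !![1,0;0,0])
  rw [qForm_mk] at h1 h2 h3
  obtain ⟨a, b, c, d, rfl⟩ : ∃ a b c d, z = !![a, b; c, d] :=
    ⟨_, _, _, _, Matrix.eta_fin_two z⟩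
  simp [Matrix.trace_fin_two, Matrix.mul_apply, Fin.sum_univ_two] at h1 h2 h3 ⊢
  refine ⟨?_, ?_, ?_⟩
  · rcases h2 with h | h
    · exact absurd h htwo
    · exact h
  · rcases h1 with h | h
    · exact absurd h htwo
    · exact h
  · linear_combination h3

section Conj
variable (ℓ : ℕ)

/-- conjugation as a linear equiv on `MatF` -/
def conjM (g : SL ℓ) : MatF ℓ ≃ₗ[ZMod ℓ] MatF ℓ where
  toFun x := ((g⁻¹ : SL ℓ) : MatF ℓ) * x * (g : MatF ℓ)
  invFun x := (g : MatF ℓ) * x * ((g⁻¹ : SL ℓ) : MatF ℓ)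
  map_add' x y := by noncomm_ring
  map_smul' c x := by simp [Matrix.mul_smul, Matrix.smul_mul]
  left_inv x := by
    have h1 : (g : MatF ℓ) * ((g⁻¹ : SL ℓ) : MatF ℓ) = 1 := by
      rw [← Matrix.SpecialLinearGroup.coe_mul, mul_inv_cancel]; simp
    calc (g : MatF ℓ) * (((g⁻¹ : SL ℓ) : MatF ℓ) * x * (g : MatF ℓ)) * ((g⁻¹ : SL ℓ) : MatF ℓ)
        = ((g : MatF ℓ) * ((g⁻¹ : SL ℓ) : MatF ℓ)) * x * ((g : MatF ℓ) * ((g⁻¹ : SL ℓ) : MatF ℓ)) := by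
          noncomm_ring
      _ = x := by rw [h1]; simp
  right_inv x := by
    have h2 : ((g⁻¹ : SL ℓ) : MatF ℓ) * (g : MatF ℓ) = 1 := by
      rw [← Matrix.SpecialLinearGroup.coe_mul, inv_mul_cancel]; simp
    calc ((g⁻¹ : SL ℓ) : MatF ℓ) * ((g : MatF ℓ) * x * ((g⁻¹ : SL ℓ) : MatF ℓ)) * (g : MatF ℓ)
        = (((g⁻¹ : SL ℓ) : MatF ℓ) * (g : MatF ℓ)) * x * (((g⁻¹ : SL ℓ) : MatF ℓ) * (g : MatF ℓ)) := by
          noncomm_ring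
      _ = x := by rw [h2]; simp

lemma conjM_map_scalar (g : SL ℓ) : (scalarSub ℓ).map (conjM ℓ g : MatF ℓ →ₗ[ZMod ℓ] MatF ℓ) = scalarSub ℓ := by
  have h2 : ((g⁻¹ : SL ℓ) : MatF ℓ) * (g : MatF ℓ) = 1 := by
    rw [← Matrix.SpecialLinearGroup.coe_mul, inv_mul_cancel]; simp
  rw [scalarSub, Submodule.map_span]
  congr 1
  simp only [Set.image_singleton]
  congr 1
  show ((g⁻¹ : SL ℓ) : MatF ℓ) * 1 * (g : MatF ℓ) = 1
  rw [mul_one, h2]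

/-- conjugation on the quotient -/
noncomputable def conjQ (g : SL ℓ) : QuotF ℓ ≃ₗ[ZMod ℓ] QuotF ℓ :=
  Submodule.Quotient.equiv _ _ (conjM ℓ g) (conjM_map_scalar ℓ g)

lemma conjQ_mk (g : SL ℓ) (m : MatF ℓ) :
    conjQ ℓ g (Submodule.Quotient.mk m) =
      Submodule.Quotient.mk (((g⁻¹ : SL ℓ) : MatF ℓ) * m * (g : MatF ℓ)) := rfl

end Conj

section Geom
variable (ℓ : ℕ)

lemma qForm_conj (g : SL ℓ) (z y : QuotF ℓ) :
    qForm ℓ (conjQ ℓ g z) (conjQ ℓ g y) = qForm ℓ z y := by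
  obtain ⟨z, rfl⟩ := Submodule.Quotient.mk_surjective _ z
  obtain ⟨y, rfl⟩ := Submodule.Quotient.mk_surjective _ y
  rw [conjQ_mk, conjQ_mk, qForm_mk, qForm_mk]
  have hBA : (g : MatF ℓ) * ((g⁻¹ : SL ℓ) : MatF ℓ) = 1 := by
    rw [← Matrix.SpecialLinearGroup.coe_mul, mul_inv_cancel]; simp
  have key : ∀ m : MatF ℓ, (((g⁻¹ : SL ℓ) : MatF ℓ) * m * (g : MatF ℓ)).trace = m.trace := by
    intro m
    rw [Matrix.trace_mul_cycle, hBA, one_mul]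
  have hprod : (((g⁻¹ : SL ℓ) : MatF ℓ) * z * (g : MatF ℓ)) * (((g⁻¹ : SL ℓ) : MatF ℓ) * y * (g : MatF ℓ))
      = ((g⁻¹ : SL ℓ) : MatF ℓ) * (z * y) * (g : MatF ℓ) := by
    calc (((g⁻¹ : SL ℓ) : MatF ℓ) * z * (g : MatF ℓ)) * (((g⁻¹ : SL ℓ) : MatF ℓ) * y * (g : MatF ℓ))
        = ((g⁻¹ : SL ℓ) : MatF ℓ) * z * ((g : MatF ℓ) * ((g⁻¹ : SL ℓ) : MatF ℓ)) * y * (g : MatF ℓ) := by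
          noncomm_ring
      _ = _ := by rw [hBA]; noncomm_ring
  rw [hprod, key, key, key]

lemma lemA' [Fact (Nat.Prime ℓ)] (hℓ2 : 2 < ℓ) (z : QuotF ℓ) (hz : z ≠ 0) :
    ∃ g : SL ℓ, conjQ ℓ g z ∉ Submodule.span (ZMod ℓ) {z} := by
  obtain ⟨x, rfl⟩ := Submodule.Quotient.mk_surjective _ z
  have hx : x ∉ scalarSub ℓ := fun h => hz ((Submodule.Quotient.mk_eq_zero _).2 h)
  obtain ⟨g, hg⟩ := lemA ℓ hℓ2 x hx
  refine ⟨g, fun hmem => ?_⟩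
  rw [Submodule.mem_span_singleton] at hmem
  obtain ⟨α, hα⟩ := hmem
  rw [conjQ_mk, ← Submodule.Quotient.mk_smul, Submodule.Quotient.eq] at hα
  rw [scalarSub, Submodule.mem_span_singleton] at hα
  obtain ⟨β, hβ⟩ := hα
  exact hg α (-β) (by linear_combination (norm := module) hβ)

lemma finrank_quotF [Fact (Nat.Prime ℓ)] : Module.finrank (ZMod ℓ) (QuotF ℓ) = 3 := by
  have h4 : Module.finrank (ZMod ℓ) (MatF ℓ) = 4 := by
    simp [Module.finrank_matrix]
  have h1 : Module.finrank (ZMod ℓ) (scalarSub ℓ) = 1 :=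
    finrank_span_singleton one_ne_zero
  have h : Module.finrank (ZMod ℓ) (QuotF ℓ) + Module.finrank (ZMod ℓ) (scalarSub ℓ) =
      Module.finrank (ZMod ℓ) (MatF ℓ) :=
    Submodule.finrank_quotient_add_finrank (scalarSub ℓ)
  omega

lemma prop_of_ker_le [Fact (Nat.Prime ℓ)] {φ ψ : QuotF ℓ →ₗ[ZMod ℓ] ZMod ℓ}
    (hker : ∀ y, φ y = 0 → ψ y = 0) {y₀ : QuotF ℓ} (hy₀ : φ y₀ ≠ 0) :
    ∃ c, ∀ y, ψ y = c * φ y := by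
  refine ⟨ψ y₀ / φ y₀, fun y => ?_⟩
  have h0 : φ (y - (φ y / φ y₀) • y₀) = 0 := by
    rw [map_sub, map_smul, smul_eq_mul]
    field_simp
    ring
  have h1 := hker _ h0
  rw [map_sub, map_smul, smul_eq_mul, sub_eq_zero] at h1
  rw [h1]
  field_simp

lemma qForm_exists_ne [Fact (Nat.Prime ℓ)] (hℓ2 : 2 < ℓ) {z : QuotF ℓ} (hz : z ≠ 0) :
    ∃ y₀, qForm ℓ z y₀ ≠ 0 := by
  by_contra h
  push_neg at h
  exact hz (qForm_nondeg ℓ hℓ2 z h)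

lemma span_pair_eq_ker [Fact (Nat.Prime ℓ)] (hℓ2 : 2 < ℓ) {x1 x2 : QuotF ℓ}
    (h : LinearIndependent (ZMod ℓ) ![x1, x2]) {z : QuotF ℓ} (hz : z ≠ 0)
    (h1 : qForm ℓ z x1 = 0) (h2 : qForm ℓ z x2 = 0) :
    Submodule.span (ZMod ℓ) {x1, x2} = LinearMap.ker (qForm ℓ z) := by
  obtain ⟨y₀, hy₀⟩ := qForm_exists_ne ℓ hℓ2 hz
  have hrange : Module.finrank (ZMod ℓ) (LinearMap.range (qForm ℓ z)) = 1 := by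
    have hle : Module.finrank (ZMod ℓ) (LinearMap.range (qForm ℓ z)) ≤ 1 := by
      have := Submodule.finrank_le (LinearMap.range (qForm ℓ z))
      simpa using this
    have hne : LinearMap.range (qForm ℓ z) ≠ ⊥ := by
      intro hb
      exact hy₀ (by simpa [hb] using LinearMap.mem_range_self (qForm ℓ z) y₀)
    have h0 : Module.finrank (ZMod ℓ) (LinearMap.range (qForm ℓ z)) ≠ 0 := by
      rw [Ne, Submodule.finrank_eq_zero]
      exact hne
    omega
  have hkerrank : Module.finrank (ZMod ℓ) (LinearMap.ker (qForm ℓ z)) = 2 := by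
    have := LinearMap.finrank_range_add_finrank_ker (qForm ℓ z)
    rw [finrank_quotF, hrange] at this
    omega
  have hle : Submodule.span (ZMod ℓ) {x1, x2} ≤ LinearMap.ker (qForm ℓ z) := by
    rw [Submodule.span_le]
    intro y hy
    rcases hy with rfl | hy
    · simpa [LinearMap.mem_ker] using h1
    · rcases hy with rfl
      simpa [LinearMap.mem_ker] using h2
  have hsp : Module.finrank (ZMod ℓ) (Submodule.span (ZMod ℓ) {x1, x2}) = 2 := by
    have := finrank_span_eq_card h
    rw [Matrix.range_cons_cons_empty x1 x2 ![]] at this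
    simpa using this
  exact Submodule.eq_of_le_of_finrank_le hle (by rw [hkerrank, hsp])

lemma exists_orth [Fact (Nat.Prime ℓ)] (x1 x2 : QuotF ℓ) :
    ∃ z : QuotF ℓ, z ≠ 0 ∧ qForm ℓ z x1 = 0 ∧ qForm ℓ z x2 = 0 := by
  set T : QuotF ℓ →ₗ[ZMod ℓ] ZMod ℓ × ZMod ℓ :=
    LinearMap.prod ((qForm ℓ).flip x1) ((qForm ℓ).flip x2) with hT
  have hker : LinearMap.ker T ≠ ⊥ := by
    intro hk
    have := LinearMap.finrank_le_finrank_of_injective (LinearMap.ker_eq_bot.mp hk)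
    rw [finrank_quotF] at this
    simp [Module.finrank_prod] at this
  obtain ⟨z, hzmem, hz0⟩ := Submodule.ne_bot_iff _ |>.mp hker
  refine ⟨z, hz0, ?_, ?_⟩
  · have := LinearMap.mem_ker.mp hzmem
    have := congrArg Prod.fst this
    simpa [hT, LinearMap.flip_apply] using this
  · have := LinearMap.mem_ker.mp hzmem
    have := congrArg Prod.snd this
    simpa [hT, LinearMap.flip_apply] using this

lemma plane_move [Fact (Nat.Prime ℓ)] (hℓ2 : 2 < ℓ) {x1 x2 : QuotF ℓ}
    (h : LinearIndependent (ZMod ℓ) ![x1, x2]) :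
    ∃ g : SL ℓ, (Submodule.span (ZMod ℓ) {x1, x2}).map
        (conjQ ℓ g : QuotF ℓ →ₗ[ZMod ℓ] QuotF ℓ) ≠ Submodule.span (ZMod ℓ) {x1, x2} := by
  obtain ⟨z, hz0, hz1, hz2⟩ := exists_orth ℓ x1 x2
  obtain ⟨g, hg⟩ := lemA' ℓ hℓ2 z hz0
  refine ⟨g, fun hW => ?_⟩
  have hWk : Submodule.span (ZMod ℓ) {x1, x2} = LinearMap.ker (qForm ℓ z) :=
    span_pair_eq_ker ℓ hℓ2 h hz0 hz1 hz2
  have hker2 : ∀ y, qForm ℓ z y = 0 → qForm ℓ (conjQ ℓ g z) y = 0 := by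
    intro y hy
    have hyW : y ∈ Submodule.span (ZMod ℓ) {x1, x2} := by
      rw [hWk]; exact LinearMap.mem_ker.mpr hy
    rw [← hW] at hyW
    obtain ⟨w, hw, rfl⟩ := Submodule.mem_map.mp hyW
    have : qForm ℓ (conjQ ℓ g z) ((conjQ ℓ g : QuotF ℓ →ₗ[ZMod ℓ] QuotF ℓ) w)
        = qForm ℓ z w := qForm_conj ℓ g z w
    rw [this]
    have : w ∈ LinearMap.ker (qForm ℓ z) := by rw [← hWk]; exact hw
    exact LinearMap.mem_ker.mp this
  obtain ⟨y₀, hy₀⟩ := qForm_exists_ne ℓ hℓ2 hz0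
  obtain ⟨c, hc⟩ := prop_of_ker_le ℓ (φ := qForm ℓ z) (ψ := qForm ℓ (conjQ ℓ g z)) hker2 hy₀
  have hzero : ∀ y, qForm ℓ (conjQ ℓ g z - c • z) y = 0 := by
    intro y
    rw [map_sub, map_smul, LinearMap.sub_apply, LinearMap.smul_apply, hc y, smul_eq_mul]
    ring
  have := qForm_nondeg ℓ hℓ2 _ hzero
  rw [sub_eq_zero] at this
  exact hg (Submodule.mem_span_singleton.mpr ⟨c, this.symm⟩)

lemma span_inf_span_bot {K V : Type*} [Field K] [AddCommGroup V] [Module K V]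
    {z z' : V} (hz' : z' ∉ Submodule.span K {z}) :
    Submodule.span K {z'} ⊓ Submodule.span K {z} = ⊥ := by
  rw [Submodule.eq_bot_iff]
  intro w hw
  obtain ⟨hw1, hw2⟩ := Submodule.mem_inf.mp hw
  obtain ⟨a, rfl⟩ := Submodule.mem_span_singleton.mp hw1
  by_cases ha : a = 0
  · simp [ha]
  · exfalso
    apply hz'
    obtain ⟨b, hb⟩ := Submodule.mem_span_singleton.mp hw2
    exact Submodule.mem_span_singleton.mpr ⟨a⁻¹ * b, by
      rw [mul_smul, hb, inv_smul_smul₀ ha]⟩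

lemma rank_le_one_cases [Fact (Nat.Prime ℓ)] (V : Submodule (ZMod ℓ) (QuotF ℓ))
    (hV : Module.finrank (ZMod ℓ) V ≤ 1) :
    V = ⊥ ∨ ∃ z : QuotF ℓ, z ≠ 0 ∧ V = Submodule.span (ZMod ℓ) {z} := by
  by_cases hb : V = ⊥
  · exact Or.inl hb
  · obtain ⟨z, hzmem, hz0⟩ := Submodule.ne_bot_iff _ |>.mp hb
    refine Or.inr ⟨z, hz0, ?_⟩
    have hle : Submodule.span (ZMod ℓ) {z} ≤ V := by
      rw [Submodule.span_le, Set.singleton_subset_iff]; exact hzmem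
    have : Module.finrank (ZMod ℓ) (Submodule.span (ZMod ℓ) {z}) = 1 :=
      finrank_span_singleton hz0
    exact (Submodule.eq_of_le_of_finrank_le hle (by omega)).symm

lemma inf_rank_le_one [Fact (Nat.Prime ℓ)] {W W' : Submodule (ZMod ℓ) (QuotF ℓ)}
    (h2 : Module.finrank (ZMod ℓ) W = 2) (h2' : Module.finrank (ZMod ℓ) W' = 2)
    (hne : W' ≠ W) : Module.finrank (ZMod ℓ) (W ⊓ W' : Submodule (ZMod ℓ) (QuotF ℓ)) ≤ 1 := by
  by_contra hc
  push_neg at hc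
  have hle : Module.finrank (ZMod ℓ) (W ⊓ W' : Submodule (ZMod ℓ) (QuotF ℓ))
      ≤ Module.finrank (ZMod ℓ) W := Submodule.finrank_mono inf_le_left
  have heq : (W ⊓ W' : Submodule (ZMod ℓ) (QuotF ℓ)) = W :=
    Submodule.eq_of_le_of_finrank_le inf_le_left (by omega)
  have hWle : W ≤ W' := by rw [← heq]; exact inf_le_right
  exact hne (Submodule.eq_of_le_of_finrank_le hWle (by omega)).symm

lemma li3_iff {x1 x2 x3 : QuotF ℓ} [Fact (Nat.Prime ℓ)] :
    LinearIndependent (ZMod ℓ) ![x1, x2, x3] ↔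
      (LinearIndependent (ZMod ℓ) ![x2, x3] ∧
        x1 ∉ Submodule.span (ZMod ℓ) {x2, x3}) := by
  rw [show (![x1,x2,x3] : Fin 3 → QuotF ℓ) = Fin.cons x1 ![x2,x3] from rfl,
    linearIndependent_fin_cons]
  rw [Matrix.range_cons_cons_empty x2 x3 ![]]

lemma li2_iff {x2 x3 : QuotF ℓ} [Fact (Nat.Prime ℓ)] :
    LinearIndependent (ZMod ℓ) ![x2, x3] ↔
      x3 ≠ 0 ∧ x2 ∉ Submodule.span (ZMod ℓ) {x3} := by
  rw [show (![x2,x3] : Fin 2 → QuotF ℓ) = Fin.cons x2 ![x3] from rfl,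
    linearIndependent_fin_cons]
  rw [show (![x3] : Fin 1 → QuotF ℓ) = fun _ => x3 from by funext i; fin_cases i; rfl,
    linearIndependent_unique_iff]
  simp [Matrix.range_cons_empty, and_comm]

end Geom

section Measure
open scoped Classical
open Finset

variable {ℓ : ℕ} [Fact (Nat.Prime ℓ)] [Fintype (QuotF ℓ)]

noncomputable def massOf (ν : QuotF ℓ → ℝ) (V : Submodule (ZMod ℓ) (QuotF ℓ)) : ℝ :=
  ∑ x, if x ∈ V then ν x else 0

variable {ν : QuotF ℓ → ℝ} {ε : ℝ}

lemma massOf_nonneg (hpos : ∀ x, 0 ≤ ν x) (V : Submodule (ZMod ℓ) (QuotF ℓ)) :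
    0 ≤ massOf ν V :=
  Finset.sum_nonneg fun x _ => by by_cases h : x ∈ V <;> simp [h, hpos x]

lemma massOf_map (g : SL ℓ) (V : Submodule (ZMod ℓ) (QuotF ℓ)) :
    massOf ν (V.map (conjQ ℓ g : QuotF ℓ →ₗ[ZMod ℓ] QuotF ℓ))
      = ∑ x, if x ∈ V then ν (conjQ ℓ g x) else 0 := by
  rw [massOf, ← Equiv.sum_comp (conjQ ℓ g).toEquiv
    (fun y => if y ∈ V.map (conjQ ℓ g : QuotF ℓ →ₗ[ZMod ℓ] QuotF ℓ) then ν y else 0)]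
  apply Finset.sum_congr rfl
  intro x _
  by_cases h : x ∈ V <;>
    simp [Submodule.mem_map_equiv, LinearEquiv.symm_apply_apply, h]

lemma massOf_shift (hshift : ∀ g : SL ℓ, ∑ x, |ν (conjQ ℓ g x) - ν x| ≤ 2*ε)
    (g : SL ℓ) (V : Submodule (ZMod ℓ) (QuotF ℓ)) :
    massOf ν V - 2*ε ≤ massOf ν (V.map (conjQ ℓ g : QuotF ℓ →ₗ[ZMod ℓ] QuotF ℓ)) := by
  rw [massOf_map]
  have h1 : massOf ν V - (∑ x, if x ∈ V then ν (conjQ ℓ g x) else 0)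
      ≤ ∑ x, |ν (conjQ ℓ g x) - ν x| := by
    rw [massOf, ← Finset.sum_sub_distrib]
    apply Finset.sum_le_sum
    intro x _
    by_cases h : x ∈ V
    · simp only [h, if_true]
      calc ν x - ν (conjQ ℓ g x) ≤ |ν x - ν (conjQ ℓ g x)| := le_abs_self _
        _ = |ν (conjQ ℓ g x) - ν x| := abs_sub_comm _ _
    · simp [h, abs_nonneg]
  have h2 := hshift g
  linarith

lemma massOf_union_bound (hpos : ∀ x, 0 ≤ ν x) (hsum1 : ∑ x, ν x = 1)
    (V V' : Submodule (ZMod ℓ) (QuotF ℓ)) :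
    massOf ν V + massOf ν V' ≤ 1 + massOf ν (V ⊓ V') := by
  have key : ∀ x : QuotF ℓ, (if x ∈ V then ν x else 0) + (if x ∈ V' then ν x else 0)
      ≤ (if x ∈ V ⊓ V' then ν x else 0) + ν x := by
    intro x
    by_cases h1 : x ∈ V <;> by_cases h2 : x ∈ V' <;>
      simp [Submodule.mem_inf, h1, h2, hpos x]
  calc massOf ν V + massOf ν V'
      = ∑ x, ((if x ∈ V then ν x else 0) + (if x ∈ V' then ν x else 0)) :=
        (Finset.sum_add_distrib).symm
    _ ≤ ∑ x, ((if x ∈ V ⊓ V' then ν x else 0) + ν x) := Finset.sum_le_sum fun x _ => key x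
    _ = massOf ν (V ⊓ V') + 1 := by rw [Finset.sum_add_distrib, hsum1, massOf]
    _ = 1 + massOf ν (V ⊓ V') := by ring

lemma massOf_bot (hzero : ν 0 = 0) : massOf ν (⊥ : Submodule (ZMod ℓ) (QuotF ℓ)) = 0 := by
  rw [massOf]
  rw [show (fun x => if x ∈ (⊥ : Submodule (ZMod ℓ) (QuotF ℓ)) then ν x else 0)
      = fun x => if x = 0 then ν x else 0 from by funext x; simp [Submodule.mem_bot]]
  rw [Finset.sum_ite_eq' Finset.univ (0 : QuotF ℓ) ν]
  simp [hzero]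

lemma massOf_line (hℓ2 : 2 < ℓ) (hε : 0 ≤ ε) (hzero : ν 0 = 0)
    (hpos : ∀ x, 0 ≤ ν x) (hsum1 : ∑ x, ν x = 1)
    (hshift : ∀ g : SL ℓ, ∑ x, |ν (conjQ ℓ g x) - ν x| ≤ 2*ε)
    (V : Submodule (ZMod ℓ) (QuotF ℓ)) (hV : Module.finrank (ZMod ℓ) V ≤ 1) :
    massOf ν V ≤ 1/2 + ε := by
  rcases rank_le_one_cases ℓ V hV with rfl | ⟨z, hz0, rfl⟩
  · rw [massOf_bot hzero]; linarith
  · obtain ⟨g, hg⟩ := lemA' ℓ hℓ2 z hz0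
    have hmap : (Submodule.span (ZMod ℓ) {z}).map (conjQ ℓ g : QuotF ℓ →ₗ[ZMod ℓ] QuotF ℓ)
        = Submodule.span (ZMod ℓ) {conjQ ℓ g z} := by
      rw [Submodule.map_span, Set.image_singleton]
      simp
    have hinf : Submodule.span (ZMod ℓ) {conjQ ℓ g z} ⊓ Submodule.span (ZMod ℓ) {z} = ⊥ :=
      span_inf_span_bot hg
    have h1 := massOf_union_bound hpos hsum1 (Submodule.span (ZMod ℓ) {conjQ ℓ g z})
      (Submodule.span (ZMod ℓ) {z})
    rw [hinf, massOf_bot hzero] at h1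
    have h2 := massOf_shift hshift g (Submodule.span (ZMod ℓ) {z})
    rw [hmap] at h2
    linarith

lemma finrank_span_pair {x1 x2 : QuotF ℓ} (h : LinearIndependent (ZMod ℓ) ![x1, x2]) :
    Module.finrank (ZMod ℓ) (Submodule.span (ZMod ℓ) {x1, x2}) = 2 := by
  have := finrank_span_eq_card h
  rw [Matrix.range_cons_cons_empty x1 x2 ![]] at this
  simpa using this

lemma massOf_plane (hℓ2 : 2 < ℓ) (hε : 0 ≤ ε) (hzero : ν 0 = 0)
    (hpos : ∀ x, 0 ≤ ν x) (hsum1 : ∑ x, ν x = 1)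
    (hshift : ∀ g : SL ℓ, ∑ x, |ν (conjQ ℓ g x) - ν x| ≤ 2*ε)
    {x1 x2 : QuotF ℓ} (h : LinearIndependent (ZMod ℓ) ![x1, x2]) :
    massOf ν (Submodule.span (ZMod ℓ) {x1, x2}) ≤ 3/4 + 3/2*ε := by
  obtain ⟨g, hg⟩ := plane_move ℓ hℓ2 h
  set W := Submodule.span (ZMod ℓ) {x1, x2} with hWdef
  set W' := W.map (conjQ ℓ g : QuotF ℓ →ₗ[ZMod ℓ] QuotF ℓ) with hW'def
  have hfW : Module.finrank (ZMod ℓ) W = 2 := finrank_span_pair h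
  have hfW' : Module.finrank (ZMod ℓ) W' = 2 := by
    rw [hW'def, LinearEquiv.finrank_map_eq]; exact hfW
  have hrank := inf_rank_le_one (ℓ := ℓ) hfW hfW' hg
  have hinfmass : massOf ν (W ⊓ W') ≤ 1/2 + ε :=
    massOf_line hℓ2 hε hzero hpos hsum1 hshift _ hrank
  have h1 := massOf_union_bound hpos hsum1 W W'
  have h2 := massOf_shift hshift g W
  rw [← hW'def] at h2
  linarith

lemma sum_compl_mass (hsum1 : ∑ x, ν x = 1) (V : Submodule (ZMod ℓ) (QuotF ℓ)) :
    ∑ x, (if x ∉ V then ν x else 0) = 1 - massOf ν V := by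
  have key : ∀ x : QuotF ℓ, (if x ∉ V then ν x else 0) = ν x - (if x ∈ V then ν x else 0) := by
    intro x
    by_cases h : x ∈ V <;> simp [h]
  rw [Finset.sum_congr rfl (fun x _ => key x), Finset.sum_sub_distrib, hsum1, massOf]

end Measure

section Main
open scoped Classical
open Finset

variable {ℓ : ℕ} [Fact (Nat.Prime ℓ)] [Fintype (QuotF ℓ)]

lemma main_bound (hℓ2 : 2 < ℓ) {ε : ℝ} (hε : 0 ≤ ε) (ν : Fin 3 → QuotF ℓ → ℝ)
    (hpos : ∀ i x, 0 ≤ ν i x)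
    (hsum' : ∀ i, ∑ x, ν i x = 1)
    (hzero : ∀ i, ν i 0 = 0)
    (hshift : ∀ (i : Fin 3) (g : SL ℓ), ∑ x, |ν i (conjQ ℓ g x) - ν i x| ≤ 2*ε) :
    (1 : ℝ) / 8 - 3 * ε ≤ ∑ x₁, ∑ x₂, ∑ x₃,
      (if LinearIndependent (ZMod ℓ) ![x₁, x₂, x₃] then ν 0 x₁ * ν 1 x₂ * ν 2 x₃ else 0) := by
  by_cases hε6 : ε ≤ 1/6
  swap
  · push_neg at hε6
    refine le_trans (by linarith : (1:ℝ)/8 - 3*ε ≤ 0) ?_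
    apply Finset.sum_nonneg; intro x₁ _
    apply Finset.sum_nonneg; intro x₂ _
    apply Finset.sum_nonneg; intro x₃ _
    split
    · exact mul_nonneg (mul_nonneg (hpos 0 x₁) (hpos 1 x₂)) (hpos 2 x₃)
    · exact le_refl 0
  · have hswap : (∑ x₁, ∑ x₂, ∑ x₃,
        (if LinearIndependent (ZMod ℓ) ![x₁, x₂, x₃] then ν 0 x₁ * ν 1 x₂ * ν 2 x₃ else 0))
        = ∑ x₃, ∑ x₂, ∑ x₁,
        (if LinearIndependent (ZMod ℓ) ![x₁, x₂, x₃] then ν 0 x₁ * ν 1 x₂ * ν 2 x₃ else 0) := by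
      calc (∑ x₁, ∑ x₂, ∑ x₃, (if LinearIndependent (ZMod ℓ) ![x₁, x₂, x₃] then
              ν 0 x₁ * ν 1 x₂ * ν 2 x₃ else 0))
          = ∑ x₂, ∑ x₁, ∑ x₃, (if LinearIndependent (ZMod ℓ) ![x₁, x₂, x₃] then
              ν 0 x₁ * ν 1 x₂ * ν 2 x₃ else 0) := Finset.sum_comm
        _ = ∑ x₂, ∑ x₃, ∑ x₁, (if LinearIndependent (ZMod ℓ) ![x₁, x₂, x₃] then
              ν 0 x₁ * ν 1 x₂ * ν 2 x₃ else 0) :=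
            Finset.sum_congr rfl fun x₂ _ => Finset.sum_comm
        _ = ∑ x₃, ∑ x₂, ∑ x₁, (if LinearIndependent (ZMod ℓ) ![x₁, x₂, x₃] then
              ν 0 x₁ * ν 1 x₂ * ν 2 x₃ else 0) := Finset.sum_comm
    rw [hswap]
    have hmain : ∀ x₃ : QuotF ℓ, ((1/2 - ε) * (1/4 - 3/2*ε)) * ν 2 x₃ ≤
        ∑ x₂, ∑ x₁, (if LinearIndependent (ZMod ℓ) ![x₁, x₂, x₃] then
          ν 0 x₁ * ν 1 x₂ * ν 2 x₃ else 0) := by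
      intro x₃
      by_cases hx₃ : x₃ = 0
      · subst hx₃
        rw [hzero 2, mul_zero]
        apply Finset.sum_nonneg; intro x₂ _
        apply Finset.sum_nonneg; intro x₁ _
        split
        · exact mul_nonneg (mul_nonneg (hpos 0 x₁) (hpos 1 x₂)) (le_refl 0)
        · exact le_refl 0
      · have hstep1 : ∀ x₂ : QuotF ℓ,
            (if x₂ ∉ Submodule.span (ZMod ℓ) {x₃} then (1/4 - 3/2*ε) * (ν 1 x₂ * ν 2 x₃) else 0)
              ≤ ∑ x₁, (if LinearIndependent (ZMod ℓ) ![x₁, x₂, x₃] then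
                ν 0 x₁ * ν 1 x₂ * ν 2 x₃ else 0) := by
          intro x₂
          by_cases h2 : LinearIndependent (ZMod ℓ) ![x₂, x₃]
          · have hx2 : x₂ ∉ Submodule.span (ZMod ℓ) {x₃} := ((li2_iff (ℓ := ℓ)).mp h2).2
            rw [if_pos hx2]
            have heq : (∑ x₁, (if LinearIndependent (ZMod ℓ) ![x₁, x₂, x₃] then
                  ν 0 x₁ * ν 1 x₂ * ν 2 x₃ else 0))
                = (1 - massOf (ν 0) (Submodule.span (ZMod ℓ) {x₂, x₃})) * (ν 1 x₂ * ν 2 x₃) := by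
              rw [← sum_compl_mass (hsum' 0) (Submodule.span (ZMod ℓ) {x₂, x₃}),
                Finset.sum_mul]
              apply Finset.sum_congr rfl
              intro x₁ _
              by_cases h1 : x₁ ∈ Submodule.span (ZMod ℓ) {x₂, x₃}
              · simp [li3_iff, h1, h2]
              · simp [li3_iff, h1, h2, mul_assoc]
            rw [heq]
            have hW := massOf_plane hℓ2 hε (hzero 0) (hpos 0) (hsum' 0) (hshift 0) h2
            have hnn : 0 ≤ ν 1 x₂ * ν 2 x₃ := mul_nonneg (hpos 1 x₂) (hpos 2 x₃)
            nlinarith [hW, hnn]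
          · have hx2' : x₂ ∈ Submodule.span (ZMod ℓ) {x₃} := by
              by_contra hc
              exact h2 ((li2_iff (ℓ := ℓ)).mpr ⟨hx₃, hc⟩)
            have hall : ∀ x₁ : QuotF ℓ, ¬ LinearIndependent (ZMod ℓ) ![x₁, x₂, x₃] :=
              fun x₁ hli => h2 ((li3_iff (ℓ := ℓ)).mp hli).1
            simp [hall, hx2']
        calc ((1/2 - ε) * (1/4 - 3/2*ε)) * ν 2 x₃
            ≤ ((1/4 - 3/2*ε) * ν 2 x₃) * (1 - massOf (ν 1) (Submodule.span (ZMod ℓ) {x₃})) := by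
              have hline := massOf_line hℓ2 hε (hzero 1) (hpos 1) (hsum' 1) (hshift 1)
                (Submodule.span (ZMod ℓ) {x₃}) (by rw [finrank_span_singleton hx₃])
              have h14 : (0:ℝ) ≤ 1/4 - 3/2*ε := by linarith
              have key := mul_le_mul_of_nonneg_left
                (by linarith : (1/2 - ε : ℝ) ≤ 1 - massOf (ν 1) (Submodule.span (ZMod ℓ) {x₃}))
                (mul_nonneg h14 (hpos 2 x₃))
              linarith [key]
          _ = ∑ x₂, (if x₂ ∉ Submodule.span (ZMod ℓ) {x₃} then
                (1/4 - 3/2*ε) * (ν 1 x₂ * ν 2 x₃) else 0) := by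
              rw [← sum_compl_mass (hsum' 1) (Submodule.span (ZMod ℓ) {x₃}), Finset.mul_sum]
              apply Finset.sum_congr rfl
              intro x₂ _
              by_cases h : x₂ ∈ Submodule.span (ZMod ℓ) {x₃} <;> simp [h] <;> ring
          _ ≤ ∑ x₂, ∑ x₁, (if LinearIndependent (ZMod ℓ) ![x₁, x₂, x₃] then
                ν 0 x₁ * ν 1 x₂ * ν 2 x₃ else 0) :=
              Finset.sum_le_sum fun x₂ _ => hstep1 x₂
    calc (1:ℝ)/8 - 3*ε ≤ (1/2 - ε) * (1/4 - 3/2*ε) := by nlinarith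
      _ = ∑ x₃, ((1/2 - ε) * (1/4 - 3/2*ε)) * ν 2 x₃ := by
          rw [← Finset.mul_sum, hsum' 2, mul_one]
      _ ≤ ∑ x₃, ∑ x₂, ∑ x₁, (if LinearIndependent (ZMod ℓ) ![x₁, x₂, x₃] then
            ν 0 x₁ * ν 1 x₂ * ν 2 x₃ else 0) := Finset.sum_le_sum fun x₃ _ => hmain x₃

end Main


open scoped Classical in
/-- Let `ℓ > 2` be a prime, `ε ≥ 0`, and let `α₁, α₂, α₃` be
independent random elements of `Q_ℓ`, each supported on nonzero elements and
each having a distribution that is `ε`-close to `SL₂(F_ℓ)`-invariant under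
conjugation: for each `g`, the statistical distance (half the ℓ¹-distance)
between the distribution and its pushforward under the map of `Q_ℓ` induced by
`x ↦ g⁻¹ x g` is at most `ε`.  Then `(α₁, α₂, α₃)` is an `F_ℓ`-basis of `Q_ℓ`
with probability at least `1/8 − 3ε`. -/
theorem stmt_5 (ℓ : ℕ) (hℓ : Nat.Prime ℓ) (hℓ2 : 2 < ℓ)
    (ε : ℝ) (hε : 0 ≤ ε)
    (ν : Fin 3 → QuotF ℓ → ℝ)
    (hpos : ∀ i x, 0 ≤ ν i x)
    (hsum : ∀ i, ∑' x, ν i x = 1)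
    (hzero : ∀ i, ν i 0 = 0)
    (hclose : ∀ (i : Fin 3) (g : Matrix.SpecialLinearGroup (Fin 2) (ZMod ℓ))
      (cg : QuotF ℓ → QuotF ℓ),
      (∀ m : MatF ℓ, cg (Submodule.Quotient.mk m) =
        Submodule.Quotient.mk
          (((g⁻¹ : Matrix.SpecialLinearGroup (Fin 2) (ZMod ℓ)) : MatF ℓ) * m * (g : MatF ℓ))) →
      (1 / 2 : ℝ) * ∑' x, |ν i (cg x) - ν i x| ≤ ε) :
    (1 : ℝ) / 8 - 3 * ε ≤ ∑' x₁, ∑' x₂, ∑' x₃,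
      (if LinearIndependent (ZMod ℓ) ![x₁, x₂, x₃] then ν 0 x₁ * ν 1 x₂ * ν 2 x₃ else 0) := by
  haveI : Fact (Nat.Prime ℓ) := ⟨hℓ⟩
  haveI : NeZero ℓ := ⟨by omega⟩
  haveI : Fintype (QuotF ℓ) := Fintype.ofFinite _
  have hsum' : ∀ i, ∑ x, ν i x = 1 := fun i => (tsum_fintype _).symm.trans (hsum i)
  have hshift : ∀ (i : Fin 3) (g : SL ℓ), ∑ x, |ν i (conjQ ℓ g x) - ν i x| ≤ 2*ε := by
    intro i g
    have h := hclose i g (conjQ ℓ g) (conjQ_mk ℓ g)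
    rw [tsum_fintype] at h
    linarith
  simp only [tsum_fintype]
  exact main_bound hℓ2 hε ν hpos hsum' hzero hshift
end

section
/- Let B be a quaternion algebra over ℚ and O an order in B. Let N ≥ 2 be an integer, and let ν be a probability distribution on O, with finite support, supported on N-reduced elements. Then there exist a prime number ℓ and an integer a ≥ 0 such that ℓ^{a+1} divides N and the probability, for α distributed according to ν, that α ∈ ℤ·1 + ℓ^a·O and α ∉ ℤ·1 + ℓ^{a+1}·O is at least 1/log₂(N). -/
open scoped Quaternion

section Helpers

variable {R : Type*} [Ring R]

private def Mem' (m : ℕ) (x : R) : Prop := ∃ (n : ℤ) (y : R), x = n • (1 : R) + m • y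

private lemma mem'_one (x : R) : Mem' 1 x := ⟨0, x, by simp⟩

private lemma mem'_of_dvd {d m : ℕ} (h : d ∣ m) {x : R} (hx : Mem' m x) : Mem' d x := by
  obtain ⟨c, rfl⟩ := h
  obtain ⟨n, y, rfl⟩ := hx
  exact ⟨n, c • y, by rw [mul_smul]⟩

private lemma mem'_mul_of_coprime {m n : ℕ} (hco : Nat.Coprime m n) {x : R}
    (h1 : Mem' m x) (h2 : Mem' n x) : Mem' (m * n) x := by
  obtain ⟨n1, y1, h1⟩ := h1
  obtain ⟨n2, y2, h2⟩ := h2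
  obtain ⟨u, v, huv⟩ := Nat.isCoprime_iff_coprime.mpr hco
  refine ⟨u * m * n2 + v * n * n1, u • y2 + v • y1, ?_⟩
  have h1' : x = n1 • (1 : R) + (m : ℤ) • y1 := by rw [h1, natCast_zsmul]
  have h2' : x = n2 • (1 : R) + (n : ℤ) • y2 := by rw [h2, natCast_zsmul]
  have key : ((m * n : ℕ) : ℤ) • (u • y2 + v • y1) = (m * n : ℕ) • (u • y2 + v • y1) :=
    natCast_zsmul _ _
  calc x = (1 : ℤ) • x := (one_zsmul x).symm
    _ = (u * m + v * n) • x := by rw [huv]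
    _ = u • ((m : ℤ) • x) + v • ((n : ℤ) • x) := by rw [add_smul, mul_smul, mul_smul]
    _ = u • ((m : ℤ) • (n2 • (1 : R) + (n : ℤ) • y2))
        + v • ((n : ℤ) • (n1 • (1 : R) + (m : ℤ) • y1)) := by rw [← h1', ← h2']
    _ = (u * m * n2 + v * n * n1) • (1 : R) + (m * n : ℕ) • (u • y2 + v • y1) := by
        rw [← key]; push_cast; module

private lemma mem'_key (x : R) : ∀ N : ℕ, 0 < N → ¬ Mem' N x →
    ∃ ℓ a : ℕ, ℓ.Prime ∧ ℓ ^ (a + 1) ∣ N ∧ Mem' (ℓ ^ a) x ∧ ¬ Mem' (ℓ ^ (a + 1)) x := by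
  intro N
  induction N using Nat.strong_induction_on with
  | _ N ih =>
    intro hN0 hNx
    classical
    have hN1 : N ≠ 1 := fun h => hNx (h ▸ mem'_one x)
    obtain ⟨p, hp, hpN⟩ := Nat.exists_prime_and_dvd hN1
    set e := N.factorization p with he
    have hNe0 : N ≠ 0 := hN0.ne'
    have hpos : 0 < e := hp.factorization_pos_of_dvd hNe0 hpN
    have hmul : p ^ e * (N / p ^ e) = N := Nat.ordProj_mul_ordCompl_eq_self N p
    have hco : Nat.Coprime (p ^ e) (N / p ^ e) :=
      Nat.Coprime.pow_left _ (Nat.coprime_ordCompl hp hNe0)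
    by_cases hpe : Mem' (p ^ e) x
    · have hM : ¬ Mem' (N / p ^ e) x := fun hM => hNx (hmul ▸ mem'_mul_of_coprime hco hpe hM)
      have hMpos : 0 < N / p ^ e := Nat.ordCompl_pos p hNe0
      have hMlt : N / p ^ e < N := by
        have h2 : 2 ≤ p ^ e := le_trans hp.two_le (Nat.le_self_pow hpos.ne' p)
        calc N / p ^ e < p ^ e * (N / p ^ e) := by
              nlinarith [hMpos]
          _ = N := hmul
      obtain ⟨ℓ, a, hℓ, hdvd, h1, h2⟩ := ih _ hMlt hMpos hM
      exact ⟨ℓ, a, hℓ, hdvd.trans (Nat.ordCompl_dvd N p), h1, h2⟩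
    · have hex : ∃ k, ¬ Mem' (p ^ k) x := ⟨e, hpe⟩
      have hkspec : ¬ Mem' (p ^ Nat.find hex) x := Nat.find_spec hex
      have hk0 : Nat.find hex ≠ 0 := by
        intro h
        exact hkspec (by rw [h, pow_zero]; exact mem'_one x)
      have hke : Nat.find hex ≤ e := Nat.find_min' hex hpe
      have hkk : Nat.find hex - 1 + 1 = Nat.find hex := by omega
      have ha : Mem' (p ^ (Nat.find hex - 1)) x := by
        by_contra h
        exact absurd (Nat.find_min' hex h) (by omega)
      refine ⟨p, Nat.find hex - 1, hp, ?_, ha, ?_⟩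
      · rw [hkk]
        exact dvd_trans (pow_dvd_pow p hke) (Nat.ordProj_dvd N p)
      · rw [hkk]
        exact hkspec

end Helpers

/-- Let `B = ℍ[ℚ, c₁, c₂]` be a quaternion algebra over `ℚ`
and `O` an order in `B` (a subring that is finitely generated as a `ℤ`-module
and spans `B` over `ℚ`).  Let `N ≥ 2` and let `ν` be a finitely supported
probability distribution on `O` supported on `N`-reduced elements.  Then there
are a prime `ℓ` and an integer `a ≥ 0` with `ℓ^{a+1} ∣ N` such that the
probability that `α ∈ ℤ·1 + ℓ^a·O` and `α ∉ ℤ·1 + ℓ^{a+1}·O` is at least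
`1/log₂ N`. -/
theorem stmt_8 (c₁ c₂ : ℚ) (hc₁ : c₁ ≠ 0) (hc₂ : c₂ ≠ 0)
    (O : Subring ℍ[ℚ, c₁, c₂])
    (hfg : Module.Finite ℤ ↥O)
    (hspan : Submodule.span ℚ (O : Set ℍ[ℚ, c₁, c₂]) = ⊤)
    (N : ℕ) (hN : 2 ≤ N)
    (ν : ↥O → ℝ)
    (hfin : (Function.support ν).Finite)
    (hpos : ∀ x, 0 ≤ ν x)
    (hsum : ∑ᶠ x, ν x = 1)
    (hred : ∀ x : ↥O, ν x ≠ 0 → ¬∃ (n : ℤ) (y : ↥O), x = n • (1 : ↥O) + N • y) :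
    ∃ (ℓ a : ℕ), Nat.Prime ℓ ∧ ℓ ^ (a + 1) ∣ N ∧
      1 / Real.logb 2 N ≤
        ∑ᶠ x ∈ {x : ↥O | (∃ (n : ℤ) (y : ↥O), x = n • (1 : ↥O) + ℓ ^ a • y) ∧
          ¬∃ (n : ℤ) (y : ↥O), x = n • (1 : ↥O) + ℓ ^ (a + 1) • y}, ν x := by
  classical
  set F := hfin.toFinset with hF
  have hN0 : N ≠ 0 := by omega
  -- the set of admissible pairs
  set T : Finset (ℕ × ℕ) :=
    (Finset.range (N + 1) ×ˢ Finset.range (N + 1)).filter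
      (fun p => p.1.Prime ∧ p.1 ^ (p.2 + 1) ∣ N) with hT
  -- the event sets
  set S : ℕ × ℕ → Set ↥O := fun p =>
    {x : ↥O | Mem' (p.1 ^ p.2) x ∧ ¬ Mem' (p.1 ^ (p.2 + 1)) x} with hS
  -- coverage
  have cover : ∀ x ∈ F, ∃ p ∈ T, x ∈ S p := by
    intro x hx
    have hνx : ν x ≠ 0 := hfin.mem_toFinset.mp hx
    have hnm : ¬ Mem' N x := hred x hνx
    obtain ⟨ℓ, a, hℓ, hdvd, h1, h2⟩ := mem'_key x N (by omega) hnm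
    refine ⟨(ℓ, a), ?_, h1, h2⟩
    have hℓN : ℓ ∣ N := dvd_trans (dvd_pow_self ℓ (Nat.succ_ne_zero a)) hdvd
    have hℓle : ℓ ≤ N := Nat.le_of_dvd (by omega) hℓN
    have hale : a + 1 ≤ N := by
      have h1' : a + 1 < 2 ^ (a + 1) := Nat.lt_two_pow_self
      have h2' : 2 ^ (a + 1) ≤ ℓ ^ (a + 1) := Nat.pow_le_pow_left hℓ.two_le _
      have h3' : ℓ ^ (a + 1) ≤ N := Nat.le_of_dvd (by omega) hdvd
      omega
    simp only [hT, Finset.mem_filter, Finset.mem_product, Finset.mem_range]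
    exact ⟨⟨by omega, by omega⟩, hℓ, hdvd⟩
  -- cardinality bound
  have hcard : T.card ≤ ∑ ℓ ∈ N.primeFactors, N.factorization ℓ := by
    rw [Finset.card_eq_sum_card_fiberwise (f := Prod.fst) (t := N.primeFactors) ?_]
    · refine Finset.sum_le_sum fun ℓ hℓ => ?_
      have hmap : (T.filter (fun q => q.1 = ℓ)).card ≤ (Finset.range (N.factorization ℓ)).card := by
        refine Finset.card_le_card_of_injOn Prod.snd ?_ ?_
        swap
        · intro p hp q hq hpq
          simp only [Finset.mem_coe, Finset.mem_filter] at hp hq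
          exact Prod.ext (hp.2.trans hq.2.symm) hpq
        intro p hp
        simp only [hT, Finset.mem_coe, Finset.mem_filter, Finset.mem_product] at hp
        obtain ⟨⟨⟨_, _⟩, hp1, hp2⟩, hfst⟩ := hp
        rw [Finset.mem_coe, Finset.mem_range]
        subst hfst
        have := (Nat.Prime.pow_dvd_iff_le_factorization hp1 hN0).mp hp2
        omega
      rw [Finset.card_range] at hmap
      exact hmap
    · intro p hp
      simp only [hT, Finset.mem_coe, Finset.mem_filter, Finset.mem_product] at hp
      exact Nat.mem_primeFactors.mpr ⟨hp.2.1,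
        dvd_trans (dvd_pow_self p.1 (Nat.succ_ne_zero p.2)) hp.2.2, hN0⟩
  have hpow : 2 ^ (∑ ℓ ∈ N.primeFactors, N.factorization ℓ) ≤ N := by
    have hprod : ∏ ℓ ∈ N.primeFactors, ℓ ^ N.factorization ℓ = N := by
      simpa [Finsupp.prod] using Nat.factorization_prod_pow_eq_self hN0
    calc 2 ^ (∑ ℓ ∈ N.primeFactors, N.factorization ℓ)
        = ∏ ℓ ∈ N.primeFactors, 2 ^ N.factorization ℓ :=
          (Finset.prod_pow_eq_pow_sum _ _ _).symm
      _ ≤ ∏ ℓ ∈ N.primeFactors, ℓ ^ N.factorization ℓ := by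
          refine Finset.prod_le_prod' fun ℓ hℓ => ?_
          exact Nat.pow_le_pow_left (Nat.prime_of_mem_primeFactors hℓ).two_le _
      _ = N := hprod
  have hcard2 : 2 ^ T.card ≤ N := le_trans (Nat.pow_le_pow_right (by norm_num) hcard) hpow
  -- convert finsum to finset sum
  have hfsum : ∀ s : Set ↥O, ∑ᶠ x ∈ s, ν x = ∑ x ∈ F, s.indicator ν x := by
    intro s
    rw [finsum_mem_def]
    refine finsum_eq_finset_sum_of_support_subset _ (s := F) ?_
    intro x hx
    have : ν x ≠ 0 := fun h => by simp [Set.indicator_apply, h] at hx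
    exact hfin.mem_toFinset.mpr this
  have hsum' : ∑ x ∈ F, ν x = 1 := by
    rw [← hsum, finsum_eq_sum ν hfin]
  -- sum over pairs bound
  have hbig : (1 : ℝ) ≤ ∑ p ∈ T, ∑ x ∈ F, (S p).indicator ν x := by
    rw [Finset.sum_comm, ← hsum']
    refine Finset.sum_le_sum fun x hx => ?_
    obtain ⟨p, hpT, hxp⟩ := cover x hx
    calc ν x = (S p).indicator ν x := (Set.indicator_of_mem hxp ν).symm
      _ ≤ ∑ q ∈ T, (S q).indicator ν x :=
          Finset.single_le_sum (f := fun q => (S q).indicator ν x)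
            (fun q _ => Set.indicator_nonneg (fun y _ => hpos y) x) hpT
  -- T is nonempty
  have hTne : T.Nonempty := by
    have hFne : F.Nonempty := by
      by_contra h
      rw [Finset.not_nonempty_iff_eq_empty] at h
      rw [h, Finset.sum_empty] at hsum'
      norm_num at hsum'
    obtain ⟨x, hx⟩ := hFne
    obtain ⟨p, hpT, _⟩ := cover x hx
    exact ⟨p, hpT⟩
  have hcardpos : (0 : ℝ) < T.card := by
    exact_mod_cast Finset.card_pos.mpr hTne
  -- pigeonhole
  have hpigeon : ∃ p ∈ T, (1 : ℝ) / T.card ≤ ∑ x ∈ F, (S p).indicator ν x := by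
    by_contra h
    push_neg at h
    have hlt : ∑ p ∈ T, ∑ x ∈ F, (S p).indicator ν x < ∑ p ∈ T, (1 : ℝ) / T.card :=
      Finset.sum_lt_sum_of_nonempty hTne fun p hp => h p hp
    rw [Finset.sum_const, nsmul_eq_mul, mul_one_div, div_self hcardpos.ne'] at hlt
    linarith
  obtain ⟨p, hpT, hple⟩ := hpigeon
  have hpT' := hpT
  simp only [hT, Finset.mem_filter, Finset.mem_product] at hpT'
  refine ⟨p.1, p.2, hpT'.2.1, hpT'.2.2, ?_⟩
  have hlogb : (T.card : ℝ) ≤ Real.logb 2 N := by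
    have h1 : ((2 : ℝ) ^ T.card) ≤ (N : ℝ) := by exact_mod_cast hcard2
    have h2 : Real.logb 2 ((2 : ℝ) ^ T.card) = T.card := by
      rw [Real.logb_pow, Real.logb_self_eq_one (by norm_num)]
      ring
    calc (T.card : ℝ) = Real.logb 2 ((2 : ℝ) ^ T.card) := h2.symm
      _ ≤ Real.logb 2 N := Real.logb_le_logb_of_le (by norm_num) (by positivity) h1
  have hfinal : 1 / Real.logb 2 N ≤ 1 / (T.card : ℝ) :=
    one_div_le_one_div_of_le hcardpos hlogb
  have hmain : 1 / Real.logb 2 N ≤ ∑ x ∈ F, (S p).indicator ν x :=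
    le_trans hfinal hple
  rw [← hfsum (S p)] at hmain
  exact hmain
end
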